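/- arXiv:1010.1654 — 4 statements merged into one kernel-verified Lean document; each statement's English description precedes it below -/
import Mathlib

section
/- There is no nonzero GL_2(F)-invariant (equivalently SL_2(F)-invariant) linear functional on the Steinberg-type space: every linear functional ℓ on the space of locally constant functions on P^1(F) with values in \overline{\mathbb{F}}_p that is invariant under the action of SL_2(F) by translations is identically zero. -/
open scoped Classical

/-- An algebraic closure of `𝔽_p`. -/
noncomputable abbrev Fbar (p : ℕ) [Fact p.Prime] := AlgebraicClosure (ZMod p)

/-- The subspace topology on `SL₂(ℚ_p)` induced from the `p`-adic topology on
`2 × 2` matrices. -/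
noncomputable instance SL2QpTop (p : ℕ) [Fact p.Prime] :
    TopologicalSpace (Matrix.SpecialLinearGroup (Fin 2) ℚ_[p]) :=
  TopologicalSpace.induced (fun g => (g : Matrix (Fin 2) (Fin 2) ℚ_[p])) inferInstance

/-- The space `S(P¹(ℚ_p))` of locally constant `\overline{𝔽}_p`-valued functions on
the projective line, realized as locally constant functions on `SL₂(ℚ_p)` that are
invariant under left translation by the Borel subgroup `B_S`. -/
noncomputable def SP1 (p : ℕ) [Fact p.Prime] :
    Submodule (Fbar p) (Matrix.SpecialLinearGroup (Fin 2) ℚ_[p] → Fbar p) where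
  carrier := {f | IsLocallyConstant f ∧
    ∀ b g : Matrix.SpecialLinearGroup (Fin 2) ℚ_[p],
      (b : Matrix (Fin 2) (Fin 2) ℚ_[p]) 1 0 = 0 → f (b * g) = f g}
  zero_mem' := ⟨IsLocallyConstant.const 0, fun _ _ _ => rfl⟩
  add_mem' := by
    rintro f g ⟨hf1, hf2⟩ ⟨hg1, hg2⟩
    exact ⟨hf1.add hg1, fun b x hb => by simp [hf2 b x hb, hg2 b x hb]⟩
  smul_mem' := by
    rintro c f ⟨hf1, hf2⟩
    exact ⟨hf1.comp (fun y => c • y), fun b x hb => by simp [hf2 b x hb]⟩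

namespace Stmt8Aux

variable {p : ℕ} [Fact p.Prime]

abbrev SL (p : ℕ) [Fact p.Prime] := Matrix.SpecialLinearGroup (Fin 2) ℚ_[p]

/-! ### basic real-power facts -/

lemma ppow_pos (n : ℤ) : (0:ℝ) < (p : ℝ) ^ n :=
  zpow_pos (by exact_mod_cast (Fact.out : p.Prime).pos) _

lemma hpR_ne : ((p:ℝ)) ≠ 0 := by exact_mod_cast (Fact.out : p.Prime).pos.ne'

lemma ppow_lt_ppow {m n : ℤ} (h : m < n) : (p:ℝ) ^ m < (p:ℝ) ^ n :=
  zpow_lt_zpow_right₀ (by exact_mod_cast (Fact.out : p.Prime).one_lt) h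

lemma ppow_le_ppow {m n : ℤ} (h : m ≤ n) : (p:ℝ) ^ m ≤ (p:ℝ) ^ n :=
  zpow_le_zpow_right₀ (by exact_mod_cast (Fact.out : p.Prime).one_lt.le) h

lemma ppow_mul_ppow_neg (n : ℤ) : (p:ℝ) ^ n * (p:ℝ) ^ (-n) = 1 := by
  rw [← zpow_add₀ hpR_ne, add_neg_cancel, zpow_zero]

lemma norm_eq_of_sub_lt {a b : ℚ_[p]} (h : ‖a - b‖ < ‖b‖) : ‖a‖ = ‖b‖ := by
  have h1 : a = (a - b) + b := by ring
  rw [h1, Padic.add_eq_max_of_ne (ne_of_lt h), max_eq_right h.le]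

/-! ### matrix entries -/

def ent (x : SL p) (i j : Fin 2) : ℚ_[p] := (x : Matrix (Fin 2) (Fin 2) ℚ_[p]) i j

noncomputable def mk2 (a b c d : ℚ_[p]) (h : a * d - b * c = 1) : SL p :=
  ⟨!![a, b; c, d], by simp [Matrix.det_fin_two_of, h]⟩

@[simp] lemma ent_mk2_00 (a b c d : ℚ_[p]) (h) : ent (mk2 a b c d h) 0 0 = a := rfl
@[simp] lemma ent_mk2_01 (a b c d : ℚ_[p]) (h) : ent (mk2 a b c d h) 0 1 = b := rfl
@[simp] lemma ent_mk2_10 (a b c d : ℚ_[p]) (h) : ent (mk2 a b c d h) 1 0 = c := rfl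
@[simp] lemma ent_mk2_11 (a b c d : ℚ_[p]) (h) : ent (mk2 a b c d h) 1 1 = d := rfl

lemma mul_apply_10 (x y : SL p) :
    ent (x * y) 1 0 = ent x 1 0 * ent y 0 0 + ent x 1 1 * ent y 1 0 := by
  simp [ent, Matrix.SpecialLinearGroup.coe_mul, Matrix.mul_apply, Fin.sum_univ_two]

lemma mul_apply_11 (x y : SL p) :
    ent (x * y) 1 1 = ent x 1 0 * ent y 0 1 + ent x 1 1 * ent y 1 1 := by
  simp [ent, Matrix.SpecialLinearGroup.coe_mul, Matrix.mul_apply, Fin.sum_univ_two]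

lemma bottom_ne_zero (x : SL p) : ¬(ent x 1 0 = 0 ∧ ent x 1 1 = 0) := by
  rintro ⟨h0, h1⟩
  have hdet := x.2
  rw [Matrix.det_fin_two] at hdet
  change ent x 0 0 * ent x 1 1 - ent x 0 1 * ent x 1 0 = 1 at hdet
  rw [h0, h1] at hdet
  simp at hdet

/-- if the bottom rows of `x` and `y` are proportional then `x * y⁻¹` is in the Borel,
so any Borel-invariant function takes the same value at `x` and `y`. -/
lemma borel_rel {Y : Type*} (x y : SL p)
    (h : ent x 1 0 * ent y 1 1 = ent x 1 1 * ent y 1 0) (f : SL p → Y)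
    (hf : ∀ b g : SL p, (b : Matrix (Fin 2) (Fin 2) ℚ_[p]) 1 0 = 0 → f (b * g) = f g) :
    f x = f y := by
  have hinv : ent (x * y⁻¹) 1 0 = 0 := by
    rw [mul_apply_10]
    have hy : y⁻¹ = ⟨![![y.1 1 1, -y.1 0 1], ![-y.1 1 0, y.1 0 0]],
        Matrix.SpecialLinearGroup.SL2_inv_expl_det y⟩ :=
      Matrix.SpecialLinearGroup.SL2_inv_expl y
    rw [hy]
    show ent x 1 0 * ent y 1 1 + ent x 1 1 * (-(ent y 1 0)) = 0
    linear_combination h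
  have := hf (x * y⁻¹) y hinv
  rwa [inv_mul_cancel_right] at this

/-! ### the ball condition and the basic functions `phi n` -/

def cond (n : ℤ) (c d : ℚ_[p]) : Prop := ‖c‖ ≤ (p : ℝ) ^ (-n) * ‖d‖

lemma cond_locally_constant (n : ℤ) (c d : ℚ_[p]) (h : ¬(c = 0 ∧ d = 0)) :
    ∃ ε > (0:ℝ), ∀ c' d' : ℚ_[p], ‖c' - c‖ < ε → ‖d' - d‖ < ε →
      (cond n c' d' ↔ cond n c d) := by
  by_cases hd : d = 0
  · have hc : c ≠ 0 := fun h0 => h ⟨h0, hd⟩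
    have hcn : (0:ℝ) < ‖c‖ := norm_pos_iff.2 hc
    refine ⟨min ‖c‖ ((p:ℝ) ^ n * ‖c‖), lt_min hcn (mul_pos (ppow_pos n) hcn), ?_⟩
    intro c' d' hc' hd'
    have hc'eq : ‖c'‖ = ‖c‖ := norm_eq_of_sub_lt (lt_of_lt_of_le hc' (min_le_left _ _))
    have hfalse : ¬ cond n c d := by
      unfold cond
      rw [hd, norm_zero, mul_zero]
      exact not_le.2 hcn
    have hfalse' : ¬ cond n c' d' := by
      unfold cond
      rw [hc'eq]
      intro hle
      have hd'n : ‖d' - d‖ < (p:ℝ) ^ n * ‖c‖ := lt_of_lt_of_le hd' (min_le_right _ _)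
      have : ‖d'‖ < (p:ℝ) ^ n * ‖c‖ := by
        simpa [hd] using hd'n
      have h2 : (p:ℝ) ^ (-n) * ‖d'‖ < (p:ℝ) ^ (-n) * ((p:ℝ) ^ n * ‖c‖) :=
        mul_lt_mul_of_pos_left this (ppow_pos _)
      rw [← mul_assoc, ← zpow_add₀ hpR_ne] at h2
      · simp only [neg_add_cancel, zpow_zero, one_mul] at h2
        exact absurd (lt_of_le_of_lt hle h2) (lt_irrefl _)
    simp [hfalse, hfalse']
  · have hdn : (0:ℝ) < ‖d‖ := norm_pos_iff.2 hd
    refine ⟨min ‖d‖ ((p:ℝ) ^ (-n) * ‖d‖), lt_min hdn (mul_pos (ppow_pos _) hdn), ?_⟩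
    intro c' d' hc' hd'
    have hd'eq : ‖d'‖ = ‖d‖ := norm_eq_of_sub_lt (lt_of_lt_of_le hd' (min_le_left _ _))
    have hcc : ‖c' - c‖ < (p:ℝ) ^ (-n) * ‖d‖ := lt_of_lt_of_le hc' (min_le_right _ _)
    unfold cond
    rw [hd'eq]
    constructor
    · intro h1
      have : ‖c‖ = ‖c' - (c' - c)‖ := by ring_nf
      calc ‖c‖ ≤ max ‖c'‖ ‖c' - c‖ := by
            rw [this, sub_eq_add_neg]
            exact (Padic.nonarchimedean _ _).trans (by rw [norm_neg])
      _ ≤ (p:ℝ) ^ (-n) * ‖d‖ := max_le h1 hcc.le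
    · intro h1
      calc ‖c'‖ = ‖c + (c' - c)‖ := by ring_nf
      _ ≤ max ‖c‖ ‖c' - c‖ := Padic.nonarchimedean _ _
      _ ≤ (p:ℝ) ^ (-n) * ‖d‖ := max_le h1 hcc.le

noncomputable def phi (n : ℤ) : SL p → Fbar p :=
  fun x => if cond n (ent x 1 0) (ent x 1 1) then 1 else 0

lemma continuous_ent (i j : Fin 2) : Continuous fun x : SL p => ent x i j :=
  (continuous_induced_dom).matrix_elem i j

lemma phi_locallyConstant (n : ℤ) : IsLocallyConstant (phi n : SL p → Fbar p) := by
  rw [IsLocallyConstant.iff_exists_open]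
  intro x
  obtain ⟨ε, hε, hloc⟩ := cond_locally_constant n (ent x 1 0) (ent x 1 1) (bottom_ne_zero x)
  refine ⟨{y : SL p | ‖ent y 1 0 - ent x 1 0‖ < ε ∧ ‖ent y 1 1 - ent x 1 1‖ < ε}, ?_, ?_, ?_⟩
  · have h1 : IsOpen {y : SL p | ‖ent y 1 0 - ent x 1 0‖ < ε} := by
      have : Continuous fun y : SL p => ‖ent y 1 0 - ent x 1 0‖ :=
        ((continuous_ent 1 0).sub continuous_const).norm
      exact isOpen_lt this continuous_const
    have h2 : IsOpen {y : SL p | ‖ent y 1 1 - ent x 1 1‖ < ε} := by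
      have : Continuous fun y : SL p => ‖ent y 1 1 - ent x 1 1‖ :=
        ((continuous_ent 1 1).sub continuous_const).norm
      exact isOpen_lt this continuous_const
    exact h1.inter h2
  · constructor <;> simp [hε]
  · rintro y ⟨hy0, hy1⟩
    unfold phi
    rw [hloc _ _ hy0 hy1]

lemma phi_borel_invariant (n : ℤ) (b x : SL p)
    (hb : (b : Matrix (Fin 2) (Fin 2) ℚ_[p]) 1 0 = 0) : phi n (b * x) = phi n x := by
  have hb' : ent b 1 0 = 0 := hb
  have hb11 : ent b 1 1 ≠ 0 := by
    intro h0
    have hdet := b.2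
    rw [Matrix.det_fin_two] at hdet
    change ent b 0 0 * ent b 1 1 - ent b 0 1 * ent b 1 0 = 1 at hdet
    rw [h0, hb'] at hdet; simp at hdet
  have h10 : ent (b*x) 1 0 = ent b 1 1 * ent x 1 0 := by rw [mul_apply_10, hb']; ring
  have h11 : ent (b*x) 1 1 = ent b 1 1 * ent x 1 1 := by rw [mul_apply_11, hb']; ring
  unfold phi
  rw [h10, h11]
  congr 1
  unfold cond
  rw [norm_mul, norm_mul, eq_iff_iff,
    show (p:ℝ)^(-n) * (‖ent b 1 1‖ * ‖ent x 1 1‖) = ‖ent b 1 1‖ * ((p:ℝ)^(-n) * ‖ent x 1 1‖) by ring]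
  exact mul_le_mul_iff_right₀ (norm_pos_iff.2 hb11)

lemma phi_mem (n : ℤ) : phi n ∈ SP1 p :=
  ⟨phi_locallyConstant n, fun b x hb => phi_borel_invariant n b x hb⟩

/-- right translates stay in SP1 -/
lemma translate_mem {f : SL p → Fbar p} (hf : f ∈ SP1 p) (g : SL p) :
    (fun x => f (x * g)) ∈ SP1 p := by
  obtain ⟨h1, h2⟩ := hf
  constructor
  · apply h1.comp_continuous
    apply continuous_induced_rng.2
    have : Continuous fun x : SL p => (x : Matrix (Fin 2) (Fin 2) ℚ_[p]) := continuous_induced_dom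
    have hmul : Continuous fun x : SL p =>
        (x : Matrix (Fin 2) (Fin 2) ℚ_[p]) * (g : Matrix (Fin 2) (Fin 2) ℚ_[p]) :=
      this.matrix_mul continuous_const
    show Continuous fun x : SL p => ((x * g : SL p) : Matrix (Fin 2) (Fin 2) ℚ_[p])
    simpa [Matrix.SpecialLinearGroup.coe_mul] using hmul
  · intro b x hb
    simp only [mul_assoc]
    exact h2 b (x * g) hb

/-! ### digits -/

lemma exists_digit (m : ℕ) (z : ℚ_[p]) (hz : ‖z‖ ≤ 1) :
    ∃ k : ℕ, k < p ^ m ∧ ‖z - (k : ℚ_[p])‖ ≤ (p : ℝ) ^ (-(m:ℤ)) := by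
  set w : ℤ_[p] := ⟨z, hz⟩ with hw
  refine ⟨w.appr m, PadicInt.appr_lt w m, ?_⟩
  have hs := PadicInt.appr_spec m w
  rw [← PadicInt.norm_le_pow_iff_mem_span_pow] at hs
  have : ((w - (w.appr m : ℤ_[p]) : ℤ_[p]) : ℚ_[p]) = z - (w.appr m : ℚ_[p]) := by
    push_cast [hw]; rfl
  rwa [PadicInt.norm_def, this] at hs

lemma digit_unique (m : ℕ) (z : ℚ_[p]) (k k' : ℕ) (hk : k < p ^ m) (hk' : k' < p ^ m)
    (h1 : ‖z - (k : ℚ_[p])‖ ≤ (p : ℝ) ^ (-(m:ℤ))) (h2 : ‖z - (k' : ℚ_[p])‖ ≤ (p : ℝ) ^ (-(m:ℤ))) :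
    k = k' := by
  set K : ℤ := (k : ℤ) - (k' : ℤ) with hK
  have hdiff : ‖(K : ℚ_[p])‖ ≤ (p : ℝ) ^ (-(m:ℤ)) := by
    have heq : ((K : ℤ) : ℚ_[p]) = (z - (k' : ℚ_[p])) - (z - (k : ℚ_[p])) := by
      rw [hK]; push_cast; ring
    rw [heq, sub_eq_add_neg]
    exact le_trans (Padic.nonarchimedean _ _) (by rw [norm_neg]; exact max_le h2 h1)
  have hdvd : ((p : ℤ) ^ m) ∣ K := by
    have := (Padic.norm_int_le_pow_iff_dvd K m).1 (by exact_mod_cast hdiff)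
    exact_mod_cast this
  obtain ⟨c, hc⟩ := hdvd
  have hkk : ((k : ℤ)) < (p:ℤ) ^ m := by exact_mod_cast hk
  have hkk' : ((k' : ℤ)) < (p:ℤ) ^ m := by exact_mod_cast hk'
  have hp : (0:ℤ) < (p:ℤ) := by exact_mod_cast (Fact.out : p.Prime).pos
  have hpm : (0:ℤ) < (p:ℤ)^m := by positivity
  have hc0 : c = 0 := by nlinarith [Int.ofNat_nonneg k, Int.ofNat_nonneg k']
  rw [hc0, mul_zero] at hc
  omega

/-! ### the descent relation -/

noncomputable def ej (n : ℤ) (j : ℕ) : SL p := mk2 1 0 ((j : ℚ_[p]) * (p:ℚ_[p])^n) 1 (by ring)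

lemma phi_descent (n : ℤ) (x : SL p) :
    phi n x = ∑ j ∈ Finset.range p, phi (n+1) (x * ej n j) := by
  set c := ent x 1 0 with hc
  set d := ent x 1 1 with hd
  have h10 : ∀ j : ℕ, ent (x * ej n j) 1 0 = c + (j : ℚ_[p]) * ((p:ℚ_[p])^n * d) := by
    intro j; rw [mul_apply_10]; simp [ej]; ring
  have h11 : ∀ j : ℕ, ent (x * ej n j) 1 1 = d := by
    intro j; rw [mul_apply_11]; simp [ej, hd]
  by_cases hd0 : d = 0
  · have hc0 : c ≠ 0 := fun h => bottom_ne_zero x ⟨h, hd0⟩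
    have hL : ¬ cond n c d := by
      unfold cond; rw [hd0, norm_zero, mul_zero]; exact not_le.2 (norm_pos_iff.2 hc0)
    have hR : ∀ j : ℕ, ¬ cond (n+1) (ent (x * ej n j) 1 0) (ent (x * ej n j) 1 1) := by
      intro j
      rw [h10 j, h11 j]
      unfold cond
      simp only [hd0, norm_zero, mul_zero, add_zero]
      exact not_le.2 (norm_pos_iff.2 hc0)
    unfold phi
    rw [if_neg hL, Finset.sum_congr rfl (fun j _ => if_neg (hR j)), Finset.sum_const, smul_zero]
  · set u : ℚ_[p] := (p:ℚ_[p])^n * d with hu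
    have hu0 : u ≠ 0 := by
      apply mul_ne_zero _ hd0
      exact zpow_ne_zero _ (by exact_mod_cast (Fact.out : p.Prime).ne_zero)
    have hnu : ‖u‖ = (p:ℝ)^(-n) * ‖d‖ := by
      rw [hu, norm_mul, Padic.norm_p_zpow]
    have hnu_pos : (0:ℝ) < ‖u‖ := norm_pos_iff.2 hu0
    set z : ℚ_[p] := -(c / u) with hz
    have hcz : c = -z * u := by rw [hz]; field_simp
    have hkey : ∀ j : ℕ, cond (n+1) (ent (x * ej n j) 1 0) (ent (x * ej n j) 1 1) ↔
        ‖z - (j : ℚ_[p])‖ ≤ (p:ℝ) ^ (-(1:ℤ)) := by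
      intro j
      rw [h10 j, h11 j]
      have harg : c + (j : ℚ_[p]) * ((p:ℚ_[p])^n * d) = ((j : ℚ_[p]) - z) * u := by
        rw [hcz, ← hu]; ring
      unfold cond
      rw [harg, norm_mul, norm_sub_rev, hnu]
      have hexp : (p:ℝ) ^ (-(n+1)) = (p:ℝ)^(-(1:ℤ)) * (p:ℝ)^(-n) := by
        rw [← zpow_add₀ hpR_ne]
        ring_nf
      rw [hexp]
      rw [show ‖z - (j:ℚ_[p])‖ * ((p:ℝ)^(-n) * ‖d‖) = ((p:ℝ)^(-n) * ‖d‖) * ‖z - (j:ℚ_[p])‖ by ring,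
          show (p:ℝ)^(-(1:ℤ)) * (p:ℝ)^(-n) * ‖d‖ = ((p:ℝ)^(-n) * ‖d‖) * (p:ℝ)^(-(1:ℤ)) by ring]
      exact mul_le_mul_iff_right₀ (mul_pos (ppow_pos _) (norm_pos_iff.2 hd0))
    by_cases hcond : cond n c d
    · have hz1 : ‖z‖ ≤ 1 := by
        rw [hz, norm_neg, norm_div]
        rw [div_le_one hnu_pos, hnu]
        exact hcond
      obtain ⟨k, hk_lt, hk_norm⟩ := exists_digit 1 z hz1
      rw [pow_one] at hk_lt
      have hk_norm' : ‖z - (k : ℚ_[p])‖ ≤ (p:ℝ) ^ (-(1:ℤ)) := by exact_mod_cast hk_norm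
      unfold phi
      rw [if_pos hcond]
      rw [Finset.sum_eq_single k]
      · rw [if_pos ((hkey k).2 hk_norm')]
      · intro j hj hjk
        rw [if_neg]
        intro hcj
        exact hjk (digit_unique 1 z j k (by simpa [pow_one] using Finset.mem_range.1 hj)
          (by simpa [pow_one] using hk_lt)
          (by exact_mod_cast (hkey j).1 hcj) hk_norm)
      · intro hk
        exact absurd (Finset.mem_range.2 hk_lt) hk
    · unfold phi
      rw [if_neg hcond]
      symm
      apply Finset.sum_eq_zero
      intro j _
      rw [if_neg]
      intro hcj
      have hzj : ‖z - (j:ℚ_[p])‖ ≤ 1 := le_trans ((hkey j).1 hcj) (by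
        calc (p:ℝ)^(-(1:ℤ)) ≤ (p:ℝ)^(0:ℤ) := ppow_le_ppow (by norm_num)
        _ = 1 := zpow_zero _)
      have hj1 : ‖(j : ℚ_[p])‖ ≤ 1 := by
        have := Padic.norm_int_le_one (p := p) (j : ℤ)
        simpa using this
      have hz1 : ‖z‖ ≤ 1 := by
        have : z = (z - (j:ℚ_[p])) + (j:ℚ_[p]) := by ring
        rw [this]
        exact le_trans (Padic.nonarchimedean _ _) (max_le hzj hj1)
      apply hcond
      unfold cond
      calc ‖c‖ = ‖z‖ * ‖u‖ := by rw [hcz, norm_mul, norm_neg]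
      _ ≤ 1 * ‖u‖ := mul_le_mul_of_nonneg_right hz1 (norm_nonneg _)
      _ = (p:ℝ)^(-n) * ‖d‖ := by rw [one_mul, hnu]

/-! ### the functional kills all `phi n` -/

noncomputable def Phi (p : ℕ) [Fact p.Prime] (n : ℤ) : SP1 p := ⟨phi n, phi_mem n⟩

lemma ell_Phi_zero (p : ℕ) [Fact p.Prime] (ℓ : SP1 p →ₗ[Fbar p] Fbar p)
    (hinv : ∀ (f f' : SP1 p) (g : SL p),
      (∀ x, (f' : _ → Fbar p) x = (f : _ → Fbar p) (x * g)) → ℓ f' = ℓ f)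
    (n : ℤ) : ℓ (Phi p n) = 0 := by
  have key : ℓ (Phi p n) = (p : Fbar p) * ℓ (Phi p (n+1)) := by
    have hsum : (Phi p n) = ∑ j ∈ Finset.range p,
        (⟨fun x => phi (n+1) (x * ej n j), translate_mem (phi_mem (n+1)) (ej n j)⟩ : SP1 p) := by
      apply Subtype.ext
      rw [AddSubmonoidClass.coe_finset_sum]
      funext x
      rw [Finset.sum_apply]
      exact phi_descent n x
    rw [hsum, map_sum,
      Finset.sum_congr rfl (fun j _ => hinv (Phi p (n+1)) _ (ej n j) (fun x => rfl)),
      Finset.sum_const, Finset.card_range, nsmul_eq_mul]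
  rw [key, CharP.cast_eq_zero (Fbar p) p, zero_mul]

/-! ### paths and uniform local constancy -/

noncomputable def sec (a : ℚ_[p]) : SL p := mk2 1 0 a 1 (by ring)

noncomputable def gam (t : ℚ_[p]) : SL p := mk2 0 (-1) 1 t (by ring)

lemma continuous_path (A : ℚ_[p] → SL p) (h : ∀ i j, Continuous fun t => ent (A t) i j) :
    Continuous A := by
  apply continuous_induced_rng.2
  exact continuous_matrix (fun i j => h i j)

lemma continuous_sec : Continuous (sec : ℚ_[p] → SL p) := by
  apply continuous_path
  intro i j
  fin_cases i <;> fin_cases j <;>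
    · simp only [sec, mk2, ent]
      first
      | exact continuous_const
      | exact continuous_id

lemma continuous_gam : Continuous (gam : ℚ_[p] → SL p) := by
  apply continuous_path
  intro i j
  fin_cases i <;> fin_cases j <;>
    · simp only [gam, mk2, ent]
      first
      | exact continuous_const
      | exact continuous_id

lemma unif_locally_constant {Y : Type*} (F : ℚ_[p] → Y) (hF : IsLocallyConstant F) (R : ℝ) :
    ∃ N : ℕ, ∀ y y' : ℚ_[p], ‖y‖ ≤ R → ‖y' - y‖ ≤ (p:ℝ) ^ (-(N:ℤ)) → F y' = F y := by
  have H : ∀ a : ℚ_[p], ∃ n : ℕ, ∀ y : ℚ_[p], ‖y - a‖ < (p:ℝ) ^ (-(n:ℤ)) → F y = F a := by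
    intro a
    obtain ⟨U, hU, haU, hconst⟩ := hF.exists_open a
    obtain ⟨ε, hε, hball⟩ := Metric.isOpen_iff.1 hU a haU
    obtain ⟨n, hn⟩ := exists_pow_lt_of_lt_one hε
      (by
        rw [inv_lt_one_iff₀]
        right
        exact_mod_cast (Fact.out : p.Prime).one_lt : (p:ℝ)⁻¹ < 1)
    refine ⟨n, fun y hy => ?_⟩
    have : y ∈ U := by
      apply hball
      rw [Metric.mem_ball, dist_eq_norm]
      calc ‖y - a‖ < (p:ℝ)^(-(n:ℤ)) := hy
      _ = ((p:ℝ)⁻¹)^n := by rw [inv_pow, ← zpow_natCast, ← zpow_neg]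
      _ < ε := hn
    exact hconst y this
  choose nn hnn using (H : ∀ a : ℚ_[p], _)
  have hcover : Metric.closedBall (0:ℚ_[p]) R ⊆
      ⋃ a : ℚ_[p], Metric.ball a ((p:ℝ) ^ (-(nn a : ℤ))) := by
    intro y _
    exact Set.mem_iUnion.2 ⟨y, Metric.mem_ball_self (ppow_pos _)⟩
  obtain ⟨t, ht⟩ := (isCompact_closedBall (0:ℚ_[p]) R).elim_finite_subcover
    (fun a => Metric.ball a ((p:ℝ) ^ (-(nn a : ℤ)))) (fun a => Metric.isOpen_ball) hcover
  refine ⟨(t.sup nn) + 1, ?_⟩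
  intro y y' hy hyy'
  have hyC : y ∈ Metric.closedBall (0:ℚ_[p]) R := by
    rw [Metric.mem_closedBall, dist_eq_norm, sub_zero]; exact hy
  obtain ⟨a, hat, hya⟩ := Set.mem_iUnion₂.1 (ht hyC)
  rw [Metric.mem_ball, dist_eq_norm] at hya
  have hNa : (nn a : ℤ) < ((t.sup nn : ℕ) + 1 : ℕ) := by
    have := Finset.le_sup (f := nn) hat
    exact_mod_cast Nat.lt_succ_of_le this
  have hy'a : ‖y' - a‖ < (p:ℝ) ^ (-(nn a : ℤ)) := by
    have h1 : ‖y' - y‖ < (p:ℝ) ^ (-(nn a : ℤ)) :=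
      lt_of_le_of_lt hyy' (ppow_lt_ppow (by omega))
    calc ‖y' - a‖ = ‖(y' - y) + (y - a)‖ := by ring_nf
    _ ≤ max ‖y' - y‖ ‖y - a‖ := Padic.nonarchimedean _ _
    _ < (p:ℝ) ^ (-(nn a : ℤ)) := max_lt h1 hya
  rw [hnn a y hya, hnn a y' hy'a]


/-! ### the decomposition of a smooth function -/

noncomputable def wel : SL p := mk2 0 1 (-1) 0 (by ring)

noncomputable def av (N k : ℕ) : ℚ_[p] := (k : ℚ_[p]) * (p:ℚ_[p]) ^ ((1:ℤ) - (N:ℤ))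

noncomputable def tk (N k : ℕ) : SL p := mk2 1 0 (-(av N k)) 1 (by ring)

lemma av_norm (N k : ℕ) : ‖(av N k : ℚ_[p])‖ ≤ (p:ℝ)^((N:ℤ)-1) := by
  unfold av
  rw [norm_mul, Padic.norm_p_zpow]
  have h1 : ‖((k:ℤ) : ℚ_[p])‖ ≤ 1 := Padic.norm_int_le_one _
  have h1' : ‖((k:ℕ) : ℚ_[p])‖ ≤ 1 := by exact_mod_cast h1
  calc ‖((k:ℕ):ℚ_[p])‖ * (p:ℝ)^(-((1:ℤ)-(N:ℤ))) ≤ 1 * (p:ℝ)^(-((1:ℤ)-(N:ℤ))) :=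
        mul_le_mul_of_nonneg_right h1' (le_of_lt (ppow_pos _))
  _ = (p:ℝ)^((N:ℤ)-1) := by rw [one_mul]; congr 1; ring

lemma main_pointwise (N n₀ : ℕ) (hN1 : 1 ≤ N) (hn₀N : n₀ ≤ N)
    (f : SL p → Fbar p)
    (hBinv : ∀ b g : SL p, (b : Matrix (Fin 2) (Fin 2) ℚ_[p]) 1 0 = 0 → f (b * g) = f g)
    (hOut : ∀ y : ℚ_[p], (p:ℝ)^((n₀:ℤ)) ≤ ‖y‖ → f (sec y) = f (gam 0))
    (hUnif : ∀ y y' : ℚ_[p], ‖y' - y‖ ≤ (p:ℝ)^(-(N:ℤ)) → f (sec y') = f (sec y))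
    (x : SL p) :
    f x = f (gam 0) * phi (N:ℤ) (x * wel)
      + ∑ k ∈ Finset.range (p ^ (2*N-1)), f (sec (av N k)) * phi (N:ℤ) (x * tk N k) := by
  have hw10 : ent (x * wel) 1 0 = -(ent x 1 1) := by
    rw [mul_apply_10]; simp [wel]
  have hw11 : ent (x * wel) 1 1 = ent x 1 0 := by
    rw [mul_apply_11]; simp [wel]
  have ht10 : ∀ k, ent (x * tk N k) 1 0 = ent x 1 0 - av N k * ent x 1 1 := by
    intro k; rw [mul_apply_10]; simp [tk]; ring
  have ht11 : ∀ k, ent (x * tk N k) 1 1 = ent x 1 1 := by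
    intro k; rw [mul_apply_11]; simp [tk]
  have hPhiW : phi (N:ℤ) (x * wel)
      = if cond (N:ℤ) (-(ent x 1 1)) (ent x 1 0) then (1 : Fbar p) else 0 := by
    unfold phi; rw [hw10, hw11]
  have hPhiT : ∀ k, phi (N:ℤ) (x * tk N k)
      = if cond (N:ℤ) (ent x 1 0 - av N k * ent x 1 1) (ent x 1 1) then (1 : Fbar p) else 0 := by
    intro k; unfold phi; rw [ht10 k, ht11 k]
  by_cases hd0 : ent x 1 1 = 0
  · have hc0 : ent x 1 0 ≠ 0 := fun h => bottom_ne_zero x ⟨h, hd0⟩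
    have hfx : f x = f (gam 0) := by
      apply borel_rel x (gam 0) _ f hBinv
      simp [gam, hd0]
    have hW1 : cond (N:ℤ) (-(ent x 1 1)) (ent x 1 0) := by
      unfold cond
      rw [hd0, neg_zero, norm_zero]
      positivity
    have hT0 : ∀ k ∈ Finset.range (p ^ (2*N-1)),
        f (sec (av N k)) * phi (N:ℤ) (x * tk N k) = 0 := by
      intro k _
      rw [hPhiT k, if_neg, mul_zero]
      unfold cond
      rw [hd0, norm_zero, mul_zero, mul_zero, sub_zero]
      exact not_le.2 (norm_pos_iff.2 hc0)
    rw [hfx, hPhiW, if_pos hW1, mul_one, Finset.sum_eq_zero hT0, add_zero]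
  · have hdn : (0:ℝ) < ‖ent x 1 1‖ := norm_pos_iff.2 hd0
    set y : ℚ_[p] := ent x 1 0 / ent x 1 1 with hy
    have hfx : f x = f (sec y) := by
      apply borel_rel x (sec y) _ f hBinv
      simp only [sec, ent_mk2_10, ent_mk2_11]
      rw [hy]
      field_simp
    have hcond_k : ∀ k : ℕ, cond (N:ℤ) (ent x 1 0 - av N k * ent x 1 1) (ent x 1 1)
        ↔ ‖y - av N k‖ ≤ (p:ℝ)^(-(N:ℤ)) := by
      intro k
      have harg : ent x 1 0 - av N k * ent x 1 1 = (y - av N k) * ent x 1 1 := by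
        rw [hy]; field_simp
      unfold cond
      rw [harg, norm_mul]
      exact mul_le_mul_iff_left₀ hdn
    by_cases hbig : ‖ent x 1 1‖ ≤ (p:ℝ)^(-(N:ℤ)) * ‖ent x 1 0‖
    · -- `x` lies in the chart at infinity
      have hc0 : ent x 1 0 ≠ 0 := by
        intro h0
        rw [h0, norm_zero, mul_zero] at hbig
        exact hd0 (norm_le_zero_iff.1 hbig)
      have hyBig : (p:ℝ)^((N:ℤ)) ≤ ‖y‖ := by
        rw [hy, norm_div, le_div_iff₀ hdn]
        calc (p:ℝ)^((N:ℤ)) * ‖ent x 1 1‖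
            ≤ (p:ℝ)^((N:ℤ)) * ((p:ℝ)^(-(N:ℤ)) * ‖ent x 1 0‖) :=
              mul_le_mul_of_nonneg_left hbig (le_of_lt (ppow_pos _))
        _ = ‖ent x 1 0‖ := by rw [← mul_assoc, ppow_mul_ppow_neg, one_mul]
      have hFy : f (sec y) = f (gam 0) :=
        hOut y (le_trans (ppow_le_ppow (by exact_mod_cast hn₀N)) hyBig)
      have hW1 : cond (N:ℤ) (-(ent x 1 1)) (ent x 1 0) := by
        unfold cond; rw [norm_neg]; exact hbig
      have hT0 : ∀ k ∈ Finset.range (p ^ (2*N-1)),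
          f (sec (av N k)) * phi (N:ℤ) (x * tk N k) = 0 := by
        intro k _
        rw [hPhiT k, if_neg, mul_zero]
        rw [hcond_k k]
        intro habs
        have h1 : ‖av N k‖ < ‖y‖ :=
          lt_of_le_of_lt (av_norm N k)
            (lt_of_lt_of_le (ppow_lt_ppow (by omega : (N:ℤ)-1 < (N:ℤ))) hyBig)
        have h2 : ‖y - av N k‖ = ‖y‖ := by
          apply norm_eq_of_sub_lt
          rw [show y - av N k - y = -(av N k) by ring, norm_neg]
          exact h1
        rw [h2] at habs
        have h3 : (p:ℝ)^(-(N:ℤ)) < ‖y‖ :=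
          lt_of_lt_of_le (ppow_lt_ppow (show -(N:ℤ) < (N:ℤ) by omega)) hyBig
        linarith
      rw [hfx, hFy, hPhiW, if_pos hW1, mul_one, Finset.sum_eq_zero hT0, add_zero]
    · push_neg at hbig
      have hW0 : ¬ cond (N:ℤ) (-(ent x 1 1)) (ent x 1 0) := by
        unfold cond; rw [norm_neg]; exact not_le.2 hbig
      have hySmall : ‖y‖ ≤ (p:ℝ)^((N:ℤ)-1) := by
        rw [Padic.norm_le_pow_iff_norm_lt_pow_add_one, sub_add_cancel, hy, norm_div,
          div_lt_iff₀ hdn]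
        calc ‖ent x 1 0‖ = (p:ℝ)^((N:ℤ)) * ((p:ℝ)^(-(N:ℤ)) * ‖ent x 1 0‖) := by
              rw [← mul_assoc, ppow_mul_ppow_neg, one_mul]
        _ < (p:ℝ)^((N:ℤ)) * ‖ent x 1 1‖ := mul_lt_mul_of_pos_left hbig (ppow_pos _)
      set z : ℚ_[p] := y * (p:ℚ_[p])^((N:ℤ)-1) with hz
      have hz1 : ‖z‖ ≤ 1 := by
        rw [hz, norm_mul, Padic.norm_p_zpow]
        calc ‖y‖ * (p:ℝ)^(-((N:ℤ)-1))
            ≤ (p:ℝ)^((N:ℤ)-1) * (p:ℝ)^(-((N:ℤ)-1)) :=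
              mul_le_mul_of_nonneg_right hySmall (le_of_lt (ppow_pos _))
        _ = 1 := ppow_mul_ppow_neg _
      have hqne : (p:ℚ_[p]) ≠ 0 := by
        exact_mod_cast (Fact.out : p.Prime).ne_zero
      have hrel : ∀ k : ℕ, ‖y - av N k‖ ≤ (p:ℝ)^(-(N:ℤ))
          ↔ ‖z - (k:ℚ_[p])‖ ≤ (p:ℝ)^(-(((2*N-1 : ℕ)):ℤ)) := by
        intro k
        have hcancel : (p:ℚ_[p])^((1:ℤ)-(N:ℤ)) * (p:ℚ_[p])^((N:ℤ)-1) = 1 := by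
          rw [← zpow_add₀ hqne]; norm_num
        have hzk : z - (k:ℚ_[p]) = (y - av N k) * (p:ℚ_[p])^((N:ℤ)-1) := by
          rw [hz]
          unfold av
          have : ((k:ℕ):ℚ_[p]) * ((p:ℚ_[p])^((1:ℤ)-(N:ℤ)) * (p:ℚ_[p])^((N:ℤ)-1))
              = ((k:ℕ):ℚ_[p]) := by rw [hcancel, mul_one]
          linear_combination this
        have hMexp : (-(((2*N-1:ℕ)):ℤ)) = (-(N:ℤ)) + (-((N:ℤ)-1)) := by omega
        rw [hzk, norm_mul, Padic.norm_p_zpow, hMexp, zpow_add₀ hpR_ne]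
        exact (mul_le_mul_iff_left₀ (ppow_pos _)).symm
      obtain ⟨k₀, hk₀lt, hk₀⟩ := exists_digit (2*N-1) z hz1
      have hsum : ∑ k ∈ Finset.range (p ^ (2*N-1)),
          f (sec (av N k)) * phi (N:ℤ) (x * tk N k) = f (sec y) := by
        rw [Finset.sum_eq_single k₀]
        · have hnear : ‖y - av N k₀‖ ≤ (p:ℝ)^(-(N:ℤ)) := (hrel k₀).2 hk₀
          rw [hPhiT k₀, if_pos ((hcond_k k₀).2 hnear), mul_one]
          exact hUnif y (av N k₀) (by rw [norm_sub_rev]; exact hnear)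
        · intro k hk hkne
          rw [hPhiT k, if_neg, mul_zero]
          rw [hcond_k k, hrel k]
          intro habs
          exact hkne (digit_unique (2*N-1) z k k₀ (Finset.mem_range.1 hk) hk₀lt habs hk₀)
        · intro hk₀mem
          exact absurd (Finset.mem_range.2 hk₀lt) hk₀mem
      rw [hfx, hPhiW, if_neg hW0, mul_zero, zero_add, hsum]

end Stmt8Aux

open Stmt8Aux in
/-- Every `SL₂(ℚ_p)`-invariant linear functional on `S(P¹(ℚ_p))` (with the right
translation action) is identically zero. -/
theorem stmt_8 (p : ℕ) [Fact p.Prime] (ℓ : SP1 p →ₗ[Fbar p] Fbar p)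
    (hinv : ∀ (f f' : SP1 p) (g : Matrix.SpecialLinearGroup (Fin 2) ℚ_[p]),
      (∀ x, (f' : _ → Fbar p) x = (f : _ → Fbar p) (x * g)) → ℓ f' = ℓ f) :
    ℓ = 0 := by
  apply LinearMap.ext
  intro f
  rw [LinearMap.zero_apply]
  have hmem : IsLocallyConstant (f : SL p → Fbar p) ∧
      ∀ b g : SL p, (b : Matrix (Fin 2) (Fin 2) ℚ_[p]) 1 0 = 0 →
        (f : SL p → Fbar p) (b * g) = (f : SL p → Fbar p) g := f.2
  obtain ⟨hlc, hBinv⟩ := hmem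
  set F : ℚ_[p] → Fbar p := fun y => (f : SL p → Fbar p) (sec y) with hFdef
  have hFlc : IsLocallyConstant F := hlc.comp_continuous continuous_sec
  -- constancy near the point at infinity
  obtain ⟨U, hUopen, h0U, hconst⟩ :=
    (hlc.comp_continuous (continuous_gam (p := p))).exists_open 0
  obtain ⟨ε, hε, hball⟩ := Metric.isOpen_iff.1 hUopen 0 h0U
  obtain ⟨n₀', hn₀'⟩ := exists_pow_lt_of_lt_one hε
    (by
      rw [inv_lt_one_iff₀]
      right
      exact_mod_cast (Fact.out : p.Prime).one_lt : (p:ℝ)⁻¹ < 1)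
  set n₀ : ℕ := n₀' + 1 with hn₀def
  have hn₀ : (p:ℝ) ^ (-(n₀:ℤ)) < ε := by
    calc (p:ℝ) ^ (-(n₀:ℤ)) ≤ (p:ℝ) ^ (-(n₀':ℤ)) := ppow_le_ppow (by omega)
    _ = ((p:ℝ)⁻¹)^n₀' := by rw [inv_pow, ← zpow_natCast, ← zpow_neg]
    _ < ε := hn₀'
  have hgam0 : ∀ t : ℚ_[p], ‖t‖ ≤ (p:ℝ)^(-(n₀:ℤ)) →
      (f : SL p → Fbar p) (gam t) = (f : SL p → Fbar p) (gam 0) := by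
    intro t ht
    apply hconst
    apply hball
    rw [Metric.mem_ball, dist_eq_norm, sub_zero]
    exact lt_of_le_of_lt ht hn₀
  have hOut : ∀ y : ℚ_[p], (p:ℝ)^((n₀:ℤ)) ≤ ‖y‖ →
      (f : SL p → Fbar p) (sec y) = (f : SL p → Fbar p) (gam 0) := by
    intro y hy
    have hy0 : y ≠ 0 := by
      intro h0
      rw [h0, norm_zero] at hy
      exact absurd (lt_of_lt_of_le (ppow_pos (p := p) ((n₀:ℤ))) hy) (lt_irrefl _)
    have h1 : (f : SL p → Fbar p) (sec y) = (f : SL p → Fbar p) (gam y⁻¹) := by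
      apply borel_rel (sec y) (gam y⁻¹) _ _ hBinv
      simp only [sec, gam, ent_mk2_10, ent_mk2_11]
      rw [mul_inv_cancel₀ hy0, one_mul]
    rw [h1]
    apply hgam0
    rw [norm_inv, zpow_neg]
    exact inv_anti₀ (ppow_pos _) hy
  obtain ⟨N₁, hN₁⟩ := unif_locally_constant F hFlc ((p:ℝ)^((n₀:ℤ)))
  set N : ℕ := n₀ + N₁ with hNdef
  have hN1 : 1 ≤ N := by omega
  have hUnif : ∀ y y' : ℚ_[p], ‖y' - y‖ ≤ (p:ℝ)^(-(N:ℤ)) → F y' = F y := by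
    intro y y' h
    by_cases hy : ‖y‖ ≤ (p:ℝ)^((n₀:ℤ))
    · exact hN₁ y y' hy (le_trans h (ppow_le_ppow (by omega)))
    · push_neg at hy
      have hsmall : (p:ℝ)^(-(N:ℤ)) < ‖y‖ := lt_trans (ppow_lt_ppow (by omega)) hy
      have hyy : ‖y'‖ = ‖y‖ := norm_eq_of_sub_lt (lt_of_le_of_lt h hsmall)
      show (f : SL p → Fbar p) (sec y') = (f : SL p → Fbar p) (sec y)
      rw [hOut y' (le_of_lt (hyy ▸ hy)), hOut y (le_of_lt hy)]
  -- the decomposition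
  have hpt := main_pointwise N n₀ hN1 (by omega) (f : SL p → Fbar p) hBinv hOut hUnif
  have hdecomp : f = ((f : SL p → Fbar p) (gam 0)) •
        (⟨fun x => phi (N:ℤ) (x * wel), translate_mem (phi_mem _) wel⟩ : SP1 p)
      + ∑ k ∈ Finset.range (p ^ (2*N-1)), ((f : SL p → Fbar p) (sec (av N k))) •
        (⟨fun x => phi (N:ℤ) (x * tk N k), translate_mem (phi_mem _) (tk N k)⟩ : SP1 p) := by
    apply Subtype.ext
    rw [Submodule.coe_add, Submodule.coe_smul, AddSubmonoidClass.coe_finset_sum]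
    funext x
    rw [Pi.add_apply, Pi.smul_apply, Finset.sum_apply]
    rw [hpt x]
    simp only [Submodule.coe_smul, Pi.smul_apply, smul_eq_mul]
  have hTinf0 : ℓ (⟨fun x => phi (N:ℤ) (x * wel),
      translate_mem (phi_mem _) wel⟩ : SP1 p) = 0 := by
    rw [hinv (Phi p (N:ℤ)) _ wel (fun x => rfl)]
    exact ell_Phi_zero p ℓ hinv _
  have hTk0 : ∀ k : ℕ, ℓ (⟨fun x => phi (N:ℤ) (x * tk N k),
      translate_mem (phi_mem _) (tk N k)⟩ : SP1 p) = 0 := by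
    intro k
    rw [hinv (Phi p (N:ℤ)) _ (tk N k) (fun x => rfl)]
    exact ell_Phi_zero p ℓ hinv _
  rw [hdecomp, map_add, map_smul, map_sum, hTinf0, smul_zero,
    Finset.sum_congr rfl (fun k _ => by rw [map_smul, hTk0 k, smul_zero])]
  simp
end

section
/- The short exact sequence 0 → 1 → Ind_{B_S}^{G_S}(1) → Sp_S → 0 of smooth \overline{\mathbb{F}}_p-representations of G_S = SL_2(F) is non-split, where 1 is the trivial representation realized as the constant functions in the smooth induction of the trivial character of the Borel B_S, and Sp_S is the quotient. -/
/-- The constant function `1`, i.e. the trivial subrepresentation of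
`Ind_{B_S}^{G_S}(1) ≃ S(P¹(ℚ_p))`. -/
noncomputable def oneFun (p : ℕ) [Fact p.Prime] : SP1 p :=
  ⟨fun _ => 1, IsLocallyConstant.const 1, fun _ _ _ => rfl⟩


namespace Stmt9Aux

variable {p : ℕ} [Fact p.Prime]

/-- Coercion to matrices, as a function. -/
noncomputable def mcoe (g : Matrix.SpecialLinearGroup (Fin 2) ℚ_[p]) :
    Matrix (Fin 2) (Fin 2) ℚ_[p] := g

/-- The lower-left entry of `g`. -/
noncomputable def cc (g : Matrix.SpecialLinearGroup (Fin 2) ℚ_[p]) : ℚ_[p] := mcoe g 1 0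

/-- The lower-right entry of `g`. -/
noncomputable def dd (g : Matrix.SpecialLinearGroup (Fin 2) ℚ_[p]) : ℚ_[p] := mcoe g 1 1

theorem continuous_mcoe : Continuous (mcoe (p := p)) := continuous_induced_dom

theorem continuous_cc : Continuous (cc (p := p)) :=
  continuous_pi_iff.mp (continuous_pi_iff.mp continuous_mcoe 1) 0

theorem continuous_dd : Continuous (dd (p := p)) :=
  continuous_pi_iff.mp (continuous_pi_iff.mp continuous_mcoe 1) 1

theorem row_ne (g : Matrix.SpecialLinearGroup (Fin 2) ℚ_[p]) : ¬(cc g = 0 ∧ dd g = 0) := by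
  rintro ⟨hc, hd⟩
  have hdet := g.prop
  rw [Matrix.det_fin_two] at hdet
  rw [cc, mcoe] at hc; rw [dd, mcoe] at hd
  rw [hc, hd] at hdet
  simp at hdet

/-- The indicator function of the set of `g` whose "point" `c/d` on `P¹` lies
in `p^n ℤ_p`. -/
noncomputable def ff (p : ℕ) [Fact p.Prime] (n : ℕ) :
    Matrix.SpecialLinearGroup (Fin 2) ℚ_[p] → Fbar p :=
  fun g => if ‖cc g‖ ≤ (p : ℝ) ^ (-(n : ℤ)) * ‖dd g‖ then 1 else 0

theorem eventually_cc (x : Matrix.SpecialLinearGroup (Fin 2) ℚ_[p])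
    {ε : ℝ} (hε : 0 < ε) :
    ∀ᶠ y in nhds x, ‖cc y - cc x‖ < ε := by
  have h2 := Metric.tendsto_nhds.mp (continuous_cc.tendsto x) ε hε
  simpa [dist_eq_norm] using h2

theorem eventually_dd (x : Matrix.SpecialLinearGroup (Fin 2) ℚ_[p])
    {ε : ℝ} (hε : 0 < ε) :
    ∀ᶠ y in nhds x, ‖dd y - dd x‖ < ε := by
  have h2 := Metric.tendsto_nhds.mp (continuous_dd.tendsto x) ε hε
  simpa [dist_eq_norm] using h2

theorem norm_le_max (a b : ℚ_[p]) : ‖b‖ ≤ max ‖a‖ ‖b - a‖ := by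
  have h := Padic.nonarchimedean a (b - a)
  simpa using h

theorem norm_stable {a b : ℚ_[p]} (h : ‖b - a‖ < ‖a‖) : ‖b‖ = ‖a‖ := by
  have hab : a + (b - a) = b := by ring
  rw [← hab, Padic.add_eq_max_of_ne (ne_of_gt h)]
  exact max_eq_left h.le

theorem ff_locallyConstant (n : ℕ) : IsLocallyConstant (ff p n) := by
  rw [IsLocallyConstant.iff_eventually_eq]
  intro x
  set r : ℝ := (p : ℝ) ^ (-(n : ℤ)) with hr
  have hrpos : 0 < r := by
    apply zpow_pos
    exact_mod_cast (Fact.out : p.Prime).pos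
  by_cases h : ‖cc x‖ ≤ r * ‖dd x‖
  · -- here dd x ≠ 0
    have hd : dd x ≠ 0 := by
      intro hd0
      have hc0 : cc x = 0 := by
        rw [hd0, norm_zero, mul_zero] at h
        exact norm_le_zero_iff.mp h
      exact row_ne x ⟨hc0, hd0⟩
    have hdpos : 0 < ‖dd x‖ := norm_pos_iff.mpr hd
    filter_upwards [eventually_cc x (mul_pos hrpos hdpos),
      eventually_dd x hdpos] with y hy1 hy2
    have hdy : ‖dd y‖ = ‖dd x‖ := norm_stable hy2
    have hcy : ‖cc y‖ ≤ r * ‖dd y‖ := by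
      rw [hdy]
      exact (norm_le_max (cc x) (cc y)).trans (max_le h hy1.le)
    simp only [ff, ← hr, if_pos hcy, if_pos h]
  · -- here cc x ≠ 0
    have hc : cc x ≠ 0 := by
      intro hc0
      exact h (by rw [hc0, norm_zero]; positivity)
    have hcpos : 0 < ‖cc x‖ := norm_pos_iff.mpr hc
    filter_upwards [eventually_cc x hcpos,
      eventually_dd x (div_pos hcpos hrpos)] with y hy1 hy2
    have hcy : ‖cc y‖ = ‖cc x‖ := norm_stable hy1
    have hdy : r * ‖dd y‖ < ‖cc y‖ := by
      rw [hcy]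
      have h1 : ‖dd y‖ ≤ max ‖dd x‖ ‖dd y - dd x‖ := norm_le_max _ _
      have h2 : r * ‖dd x‖ < ‖cc x‖ := lt_of_not_ge h
      have h3 : r * ‖dd y - dd x‖ < ‖cc x‖ := by
        rw [mul_comm]
        exact (lt_div_iff₀ hrpos).mp hy2
      calc r * ‖dd y‖ ≤ r * max ‖dd x‖ ‖dd y - dd x‖ := by
            exact mul_le_mul_of_nonneg_left h1 hrpos.le
        _ = max (r * ‖dd x‖) (r * ‖dd y - dd x‖) := by
            rw [mul_max_of_nonneg _ _ hrpos.le]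
        _ < ‖cc x‖ := max_lt h2 h3
    simp only [ff, ← hr, if_neg (not_le.mpr hdy), if_neg h]

theorem ff_inv (n : ℕ) (b g : Matrix.SpecialLinearGroup (Fin 2) ℚ_[p])
    (hb : (b : Matrix (Fin 2) (Fin 2) ℚ_[p]) 1 0 = 0) : ff p n (b * g) = ff p n g := by
  have hdet := b.prop
  rw [Matrix.det_fin_two, hb] at hdet
  simp only [mul_zero, sub_zero] at hdet
  have hb11 : (b : Matrix (Fin 2) (Fin 2) ℚ_[p]) 1 1 ≠ 0 := by
    intro h0; rw [h0, mul_zero] at hdet; exact zero_ne_one hdet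
  have hcc : cc (b * g) = (b : Matrix (Fin 2) (Fin 2) ℚ_[p]) 1 1 * cc g := by
    simp only [cc, dd, mcoe, Matrix.SpecialLinearGroup.coe_mul, Matrix.mul_apply,
      Fin.sum_univ_two, hb]
    ring
  have hdd : dd (b * g) = (b : Matrix (Fin 2) (Fin 2) ℚ_[p]) 1 1 * dd g := by
    simp only [cc, dd, mcoe, Matrix.SpecialLinearGroup.coe_mul, Matrix.mul_apply,
      Fin.sum_univ_two, hb]
    ring
  have hbpos : 0 < ‖(b : Matrix (Fin 2) (Fin 2) ℚ_[p]) 1 1‖ := norm_pos_iff.mpr hb11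
  simp only [ff, hcc, hdd, norm_mul]
  congr 1
  rw [mul_left_comm]
  exact propext (mul_le_mul_iff_right₀ hbpos)

/-- `ff` as an element of `SP1 p`. -/
noncomputable def ffS (p : ℕ) [Fact p.Prime] (n : ℕ) : SP1 p :=
  ⟨ff p n, ff_locallyConstant n, ff_inv n⟩

theorem continuous_mul_right (g : Matrix.SpecialLinearGroup (Fin 2) ℚ_[p]) :
    Continuous (fun x : Matrix.SpecialLinearGroup (Fin 2) ℚ_[p] => x * g) := by
  apply continuous_induced_rng.2
  have heq : (fun x : Matrix.SpecialLinearGroup (Fin 2) ℚ_[p] => mcoe (x * g))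
      = fun x : Matrix.SpecialLinearGroup (Fin 2) ℚ_[p] => mcoe x * mcoe g := by
    funext x
    exact Matrix.SpecialLinearGroup.coe_mul x g
  show Continuous fun x : Matrix.SpecialLinearGroup (Fin 2) ℚ_[p] => mcoe (x * g)
  rw [heq]
  exact Continuous.matrix_mul continuous_mcoe continuous_const

/-- Right translation of an element of `SP1 p`. -/
noncomputable def translate (f : SP1 p) (g : Matrix.SpecialLinearGroup (Fin 2) ℚ_[p]) :
    SP1 p :=
  ⟨fun x => (f : _ → Fbar p) (x * g),
   f.prop.1.comp_continuous (continuous_mul_right g),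
   fun b x hb => by
    have := f.prop.2 b (x * g) hb
    rw [← mul_assoc] at this
    exact this⟩

theorem hpR1 : (1 : ℝ) < (p : ℝ) := by
  exact_mod_cast (Fact.out : p.Prime).one_lt

theorem hpR0 : (p : ℝ) ≠ 0 := by
  have := (Fact.out : p.Prime).pos
  positivity

theorem norm_lt_to_le {c d : ℚ_[p]} (hc : c ≠ 0) (h : ‖d‖ < ‖c‖) :
    ‖d‖ ≤ (p : ℝ)⁻¹ * ‖c‖ := by
  have hv := Padic.norm_eq_zpow_neg_valuation hc
  have h2 : ‖d‖ < (p : ℝ) ^ ((-c.valuation - 1) + 1) := by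
    rw [sub_add_cancel, ← hv]; exact h
  have h3 := (Padic.norm_le_pow_iff_norm_lt_pow_add_one d (-c.valuation - 1)).mpr h2
  refine h3.trans (le_of_eq ?_)
  rw [hv, sub_eq_add_neg, add_comm, zpow_add₀ hpR0, zpow_neg_one]

theorem exactly_one (c d : ℚ_[p]) (hne : ¬(c = 0 ∧ d = 0)) :
    (‖c‖ ≤ ‖d‖ ∧ ¬(‖d‖ ≤ (p : ℝ)⁻¹ * ‖c‖)) ∨
      (¬(‖c‖ ≤ ‖d‖) ∧ ‖d‖ ≤ (p : ℝ)⁻¹ * ‖c‖) := by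
  by_cases h1 : ‖c‖ ≤ ‖d‖
  · left
    refine ⟨h1, fun h2 => ?_⟩
    have hinv1 : (p : ℝ)⁻¹ < 1 := inv_lt_one_of_one_lt₀ hpR1
    have hcc : ‖c‖ ≤ (p : ℝ)⁻¹ * ‖c‖ := h1.trans h2
    have hc0 : c = 0 := by
      by_contra hc
      have hcpos : 0 < ‖c‖ := norm_pos_iff.mpr hc
      nlinarith
    have hd0 : d = 0 := by
      rw [hc0, norm_zero, mul_zero] at h2
      exact norm_le_zero_iff.mp h2
    exact hne ⟨hc0, hd0⟩
  · right
    refine ⟨h1, ?_⟩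
    have hc : c ≠ 0 := by
      intro hc0
      exact h1 (by rw [hc0, norm_zero]; positivity)
    exact norm_lt_to_le hc (lt_of_not_ge h1)

/-- The Weyl element. -/
noncomputable def ww : Matrix.SpecialLinearGroup (Fin 2) ℚ_[p] :=
  ⟨!![0, -1; 1, 0], by simp [Matrix.det_fin_two_of]⟩

theorem cc_mul_ww (x : Matrix.SpecialLinearGroup (Fin 2) ℚ_[p]) : cc (x * ww) = dd x := by
  simp only [cc, dd, mcoe, Matrix.SpecialLinearGroup.coe_mul]
  simp only [cc, dd, mcoe, Matrix.SpecialLinearGroup.coe_mul, Matrix.mul_apply,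
    Fin.sum_univ_two, ww]
  simp

theorem dd_mul_ww (x : Matrix.SpecialLinearGroup (Fin 2) ℚ_[p]) : dd (x * ww) = -cc x := by
  simp only [cc, dd, mcoe, Matrix.SpecialLinearGroup.coe_mul]
  simp only [cc, dd, mcoe, Matrix.SpecialLinearGroup.coe_mul, Matrix.mul_apply,
    Fin.sum_univ_two, ww]
  simp

/-- A lower unipotent element. -/
noncomputable def uu (a : ℚ_[p]) : Matrix.SpecialLinearGroup (Fin 2) ℚ_[p] :=
  ⟨!![1, 0; a, 1], by simp [Matrix.det_fin_two_of]⟩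

theorem cc_mul_uu (x : Matrix.SpecialLinearGroup (Fin 2) ℚ_[p]) (a : ℚ_[p]) :
    cc (x * uu a) = cc x + dd x * a := by
  simp only [cc, dd, mcoe, Matrix.SpecialLinearGroup.coe_mul]
  simp only [cc, dd, mcoe, Matrix.SpecialLinearGroup.coe_mul, Matrix.mul_apply,
    Fin.sum_univ_two, uu]
  simp

theorem dd_mul_uu (x : Matrix.SpecialLinearGroup (Fin 2) ℚ_[p]) (a : ℚ_[p]) :
    dd (x * uu a) = dd x := by
  simp only [cc, dd, mcoe, Matrix.SpecialLinearGroup.coe_mul]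
  simp only [cc, dd, mcoe, Matrix.SpecialLinearGroup.coe_mul, Matrix.mul_apply,
    Fin.sum_univ_two, uu]
  simp

/-- The constant function `1` decomposes as the sum of the indicator of `ℤ_p ⊂ P¹` and a
translate of the indicator of `pℤ_p`. -/
theorem oneFun_eq : oneFun p = ffS p 0 + translate (ffS p 1) ww := by
  apply Subtype.ext
  funext x
  show (1 : Fbar p) = ff p 0 x + ff p 1 (x * ww)
  have h0 : ((p : ℝ) ^ (-((0 : ℕ) : ℤ))) = 1 := by norm_num
  have h1 : ((p : ℝ) ^ (-((1 : ℕ) : ℤ))) = (p : ℝ)⁻¹ := by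
    norm_num
  rcases exactly_one (cc x) (dd x) (row_ne x) with ⟨ha, hb⟩ | ⟨ha, hb⟩
  · rw [ff, ff, cc_mul_ww, dd_mul_ww, norm_neg, h0, h1, one_mul, if_pos ha, if_neg hb]
    simp
  · rw [ff, ff, cc_mul_ww, dd_mul_ww, norm_neg, h0, h1, one_mul, if_neg ha, if_pos hb]
    simp

theorem mem_maxIdeal_iff (x : ℤ_[p]) : x ∈ IsLocalRing.maximalIdeal ℤ_[p] ↔ ‖x‖ < 1 := by
  rw [PadicInt.maximalIdeal_eq_span_p, Ideal.mem_span_singleton, ← PadicInt.norm_lt_one_iff_dvd]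

/-- The indicator of `p^nℤ_p` decomposes as a sum of `p` translates of the indicator of
`p^(n+1)ℤ_p`. -/
theorem ffS_eq (n : ℕ) :
    ffS p n = ∑ j ∈ Finset.range p,
      translate (ffS p (n + 1)) (uu ((j : ℚ_[p]) * (p : ℚ_[p]) ^ n)) := by
  apply Subtype.ext
  funext x
  rw [Submodule.coe_sum, Finset.sum_apply]
  show ff p n x = ∑ j ∈ Finset.range p, ff p (n + 1) (x * uu ((j : ℚ_[p]) * (p : ℚ_[p]) ^ n))
  simp only [ff, cc_mul_uu, dd_mul_uu]
  have hpn_pos : (0 : ℝ) < (p : ℝ) ^ (-(n : ℤ)) := zpow_pos (lt_trans one_pos hpR1) _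
  by_cases hc : ‖cc x‖ ≤ (p : ℝ) ^ (-(n : ℤ)) * ‖dd x‖
  · -- the interesting case
    have hd : dd x ≠ 0 := by
      intro hd0
      have hc0 : cc x = 0 := by
        rw [hd0, norm_zero, mul_zero] at hc
        exact norm_le_zero_iff.mp hc
      exact row_ne x ⟨hc0, hd0⟩
    have hdpos : 0 < ‖dd x‖ := norm_pos_iff.mpr hd
    have hpQ : ((p : ℚ_[p]) : ℚ_[p]) ≠ 0 := by
      exact_mod_cast Nat.cast_ne_zero.mpr (Fact.out : p.Prime).ne_zero
    have hA : dd x * (p : ℚ_[p]) ^ n ≠ 0 := mul_ne_zero hd (pow_ne_zero _ hpQ)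
    have hAnorm : ‖dd x * (p : ℚ_[p]) ^ n‖ = ‖dd x‖ * (p : ℝ) ^ (-(n : ℤ)) := by
      rw [norm_mul, Padic.norm_p_pow]
    have hApos : 0 < ‖dd x * (p : ℚ_[p]) ^ n‖ := norm_pos_iff.mpr hA
    set t : ℚ_[p] := cc x / (dd x * (p : ℚ_[p]) ^ n) with ht
    have hct : cc x = t * (dd x * (p : ℚ_[p]) ^ n) := (div_mul_cancel₀ _ hA).symm
    have htle : ‖t‖ ≤ 1 := by
      rw [ht, norm_div, div_le_one hApos, hAnorm, mul_comm]
      exact hc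
    set T : ℤ_[p] := ⟨t, htle⟩ with hT
    obtain ⟨j₀, ⟨hj₀p, hj₀m⟩, huniq⟩ := PadicInt.existsUnique_mem_range (-T)
    have hkey : ∀ j : ℕ,
        (‖cc x + dd x * ((j : ℚ_[p]) * (p : ℚ_[p]) ^ n)‖ ≤
          (p : ℝ) ^ (-((n : ℤ) + 1)) * ‖dd x‖) ↔ (-T) - (j : ℤ_[p]) ∈ IsLocalRing.maximalIdeal ℤ_[p] := by
      intro j
      have hform : cc x + dd x * ((j : ℚ_[p]) * (p : ℚ_[p]) ^ n)
          = (t + (j : ℚ_[p])) * (dd x * (p : ℚ_[p]) ^ n) := by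
        rw [hct]; ring
      have hRHS : (p : ℝ) ^ (-((n : ℤ) + 1)) * ‖dd x‖
          = (p : ℝ)⁻¹ * ‖dd x * (p : ℚ_[p]) ^ n‖ := by
        rw [hAnorm, neg_add, zpow_add₀ hpR0, zpow_neg_one]
        ring
      rw [hform, norm_mul, hRHS, mul_le_mul_iff_left₀ hApos]
      have hnormT : ‖(-T) - (j : ℤ_[p])‖ = ‖t + (j : ℚ_[p])‖ := by
        rw [PadicInt.norm_def]
        push_cast
        rw [show -(t : ℚ_[p]) - (j : ℚ_[p]) = -(t + (j : ℚ_[p])) by ring, norm_neg]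
      rw [mem_maxIdeal_iff, hnormT]
      have := Padic.norm_le_pow_iff_norm_lt_pow_add_one (t + (j : ℚ_[p])) (-1)
      rw [show (-1 : ℤ) + 1 = 0 by ring, zpow_zero, zpow_neg_one] at this
      exact this
    rw [if_pos hc]
    have hcongr : ∀ j ∈ Finset.range p,
        (if ‖cc x + dd x * ((j : ℚ_[p]) * (p : ℚ_[p]) ^ n)‖ ≤
            (p : ℝ) ^ (-((n : ℕ) + 1 : ℕ) : ℤ) * ‖dd x‖ then (1 : Fbar p) else 0)
          = if j = j₀ then (1 : Fbar p) else 0 := by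
      intro j hj
      have hcast : (-((n : ℕ) + 1 : ℕ) : ℤ) = -((n : ℤ) + 1) := by push_cast; ring
      rw [hcast]
      by_cases hP : (-T) - (j : ℤ_[p]) ∈ IsLocalRing.maximalIdeal ℤ_[p]
      · rw [if_pos ((hkey j).mpr hP), if_pos (huniq j ⟨Finset.mem_range.mp hj, hP⟩)]
      · rw [if_neg (fun hcon => hP ((hkey j).mp hcon)), if_neg ?_]
        intro hjj
        exact hP (hjj ▸ hj₀m)
    rw [Finset.sum_congr rfl hcongr, Finset.sum_ite_eq' (Finset.range p) j₀ (fun _ => (1 : Fbar p)),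
      if_pos (Finset.mem_range.mpr hj₀p)]
  · rw [if_neg hc]
    refine (Finset.sum_eq_zero fun j hj => ?_).symm
    rw [if_neg]
    intro hcon
    apply hc
    have hle1 : ‖cc x + dd x * ((j : ℚ_[p]) * (p : ℚ_[p]) ^ n)‖ ≤ (p : ℝ) ^ (-(n : ℤ)) * ‖dd x‖ := by
      refine hcon.trans ?_
      apply mul_le_mul_of_nonneg_right _ (norm_nonneg _)
      apply zpow_le_zpow_right₀ hpR1.le
      push_cast; omega
    have hle2 : ‖dd x * ((j : ℚ_[p]) * (p : ℚ_[p]) ^ n)‖ ≤ (p : ℝ) ^ (-(n : ℤ)) * ‖dd x‖ := by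
      rw [norm_mul, norm_mul, Padic.norm_p_pow]
      have hj1 : ‖((j : ℤ) : ℚ_[p])‖ ≤ 1 := Padic.norm_int_le_one _
      rw [Int.cast_natCast] at hj1
      calc ‖dd x‖ * (‖(j : ℚ_[p])‖ * (p : ℝ) ^ (-(n : ℤ)))
          ≤ ‖dd x‖ * (1 * (p : ℝ) ^ (-(n : ℤ))) := by
            apply mul_le_mul_of_nonneg_left _ (norm_nonneg _)
            exact mul_le_mul_of_nonneg_right hj1 hpn_pos.le
        _ = (p : ℝ) ^ (-(n : ℤ)) * ‖dd x‖ := by ring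
    have hsplit : cc x = (cc x + dd x * ((j : ℚ_[p]) * (p : ℚ_[p]) ^ n))
        - dd x * ((j : ℚ_[p]) * (p : ℚ_[p]) ^ n) := by ring
    calc ‖cc x‖ ≤ max ‖cc x + dd x * ((j : ℚ_[p]) * (p : ℚ_[p]) ^ n)‖
          ‖cc x - (cc x + dd x * ((j : ℚ_[p]) * (p : ℚ_[p]) ^ n))‖ := norm_le_max _ _
      _ ≤ (p : ℝ) ^ (-(n : ℤ)) * ‖dd x‖ := by
          apply max_le hle1
          rw [show cc x - (cc x + dd x * ((j : ℚ_[p]) * (p : ℚ_[p]) ^ n))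
            = -(dd x * ((j : ℚ_[p]) * (p : ℚ_[p]) ^ n)) by ring, norm_neg]
          exact hle2

end Stmt9Aux

/-- The short exact sequence `0 → 1 → Ind_{B_S}^{G_S}(1) → Sp_S → 0` of smooth
representations of `SL₂(ℚ_p)` is non-split: there is no `SL₂(ℚ_p)`-equivariant
linear retraction onto the constant functions, i.e. no invariant linear functional
taking the value `1` on the constant function `1`. -/
theorem stmt_9 (p : ℕ) [Fact p.Prime] (ℓ : SP1 p →ₗ[Fbar p] Fbar p)
    (hinv : ∀ (f f' : SP1 p) (g : Matrix.SpecialLinearGroup (Fin 2) ℚ_[p]),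
      (∀ x, (f' : _ → Fbar p) x = (f : _ → Fbar p) (x * g)) → ℓ f' = ℓ f) :
    ℓ (oneFun p) ≠ 1 := by
  intro hone
  have htr : ∀ (f : SP1 p) (g : Matrix.SpecialLinearGroup (Fin 2) ℚ_[p]),
      ℓ (Stmt9Aux.translate f g) = ℓ f :=
    fun f g => hinv f (Stmt9Aux.translate f g) g (fun _ => rfl)
  have hzero : ∀ n, ℓ (Stmt9Aux.ffS p n) = 0 := by
    intro n
    have h := congrArg ℓ (Stmt9Aux.ffS_eq (p := p) n)
    rw [map_sum] at h
    have h2 : ∀ j ∈ Finset.range p,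
        ℓ (Stmt9Aux.translate (Stmt9Aux.ffS p (n + 1))
          (Stmt9Aux.uu ((j : ℚ_[p]) * (p : ℚ_[p]) ^ n)))
        = ℓ (Stmt9Aux.ffS p (n + 1)) := fun j _ => htr _ _
    rw [Finset.sum_congr rfl h2, Finset.sum_const, Finset.card_range] at h
    have hp0 : (p : Fbar p) = 0 := CharP.cast_eq_zero (Fbar p) p
    rw [h, nsmul_eq_mul, hp0, zero_mul]
  have h1 := congrArg ℓ (Stmt9Aux.oneFun_eq (p := p))
  rw [map_add, htr, hzero 0, hzero 1, zero_add, hone] at h1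
  exact one_ne_zero h1
end

section
/- Key summation identity (unramified case, level 1): let F be a nonarchimedean local field with uniformizer ϖ and residue field of size q = p^f, let Λ ∈ \overline{\mathbb{F}}_p^×, and define φ₀ : F → \overline{\mathbb{F}}_p by φ₀(x) = 1 if v(x) ≥ 0 and φ₀(x) = Λ^{v(x)} if v(x) ≤ 0. Then for every y ∈ F, Σ_{x ∈ R₁} φ₀(y + x/ϖ) = (1 − Λ^{-1}) · 1_{ϖ^{-1}O_F}(y), where R₁ ⊂ O_F is any set of representatives of O_F/ϖO_F. -/
section aux
variable {p : ℕ} [Fact p.Prime]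

lemma dvd_iff_toZMod_eq_zero (z : ℤ_[p]) :
    (p : ℤ_[p]) ∣ z ↔ PadicInt.toZMod z = 0 := by
  rw [← Ideal.mem_span_singleton, ← PadicInt.maximalIdeal_eq_span_p,
    ← PadicInt.ker_toZMod, RingHom.mem_ker]

lemma card_reps (R₁ : Finset ℤ_[p])
    (hrep : ∀ a : ℤ_[p], ∃! x : ℤ_[p], x ∈ R₁ ∧ (p : ℤ_[p]) ∣ (a - x)) :
    R₁.card = p := by
  have h : R₁.card = (Finset.univ : Finset (ZMod p)).card := by
    apply Finset.card_bij (fun x _ => PadicInt.toZMod x)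
    · intro a _; exact Finset.mem_univ _
    · intro a ha b hb hab
      obtain ⟨x, -, hx⟩ := hrep a
      have h1 : a = x := hx a ⟨ha, ⟨0, by ring⟩⟩
      have h2 : b = x := hx b ⟨hb, by
        rw [dvd_iff_toZMod_eq_zero, map_sub, hab, sub_self]⟩
      rw [h1, h2]
    · intro b _
      obtain ⟨x, ⟨hx1, hx2⟩, -⟩ := hrep ((b.val : ℤ_[p]))
      rw [dvd_iff_toZMod_eq_zero, map_sub, sub_eq_zero] at hx2
      exact ⟨x, hx1, by rw [← hx2, map_natCast, ZMod.natCast_val, ZMod.cast_id]⟩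
  rw [h, Finset.card_univ, ZMod.card]

lemma val_eq_of_norm_eq {u v : ℚ_[p]} (hu : u ≠ 0) (hv : v ≠ 0)
    (h : ‖u‖ = ‖v‖) : u.valuation = v.valuation := by
  rw [Padic.norm_eq_zpow_neg_valuation hu, Padic.norm_eq_zpow_neg_valuation hv] at h
  have h1 : (1 : ℝ) < (p : ℝ) := by exact_mod_cast (Fact.out : p.Prime).one_lt
  exact neg_injective ((zpow_right_strictMono₀ h1).injective h)

end aux

/-- Key summation identity (unramified case, level 1): with
`φ₀(x) = 1` for `v(x) ≥ 0` and `φ₀(x) = Λ^{v(x)}` for `v(x) < 0`, and `R₁` a set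
of representatives of `O_F/ϖO_F` (here `F = ℚ_p`, `ϖ = p`), one has
`Σ_{x ∈ R₁} φ₀(y + x/ϖ) = (1 − Λ⁻¹)·1_{ϖ⁻¹O_F}(y)` for every `y`. -/
theorem stmt_11 (p : ℕ) [Fact p.Prime] (Λ : (Fbar p)ˣ)
    (R₁ : Finset ℤ_[p])
    (hrep : ∀ a : ℤ_[p], ∃! x : ℤ_[p], x ∈ R₁ ∧ (p : ℤ_[p]) ∣ (a - x))
    (φ : ℚ_[p] → Fbar p)
    (hφ : ∀ x : ℚ_[p], φ x =
      if 0 ≤ x.valuation then 1 else (Λ : Fbar p) ^ x.valuation)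
    (y : ℚ_[p]) :
    ∑ x ∈ R₁, φ (y + (x : ℚ_[p]) / (p : ℚ_[p])) =
      (1 - (Λ : Fbar p)⁻¹) * (if ‖y‖ ≤ (p : ℝ) then 1 else 0) := by
  have hp : p.Prime := Fact.out
  have hp1 : (1 : ℝ) < (p : ℝ) := by exact_mod_cast hp.one_lt
  have hp0 : (0 : ℝ) < (p : ℝ) := by positivity
  have hpQ : (p : ℚ_[p]) ≠ 0 := Nat.cast_ne_zero.2 hp.ne_zero
  have hcard : R₁.card = p := card_reps R₁ hrep
  have hpF : ((p : ℕ) : Fbar p) = 0 := CharP.cast_eq_zero (Fbar p) p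
  classical
  by_cases hy : ‖y‖ ≤ (p : ℝ)
  · -- y ∈ ϖ⁻¹ O_F
    have hay : ‖(p : ℚ_[p]) * y‖ ≤ 1 := by
      rw [norm_mul, Padic.norm_p]
      calc (p : ℝ)⁻¹ * ‖y‖ ≤ (p:ℝ)⁻¹ * (p:ℝ) := by
            apply mul_le_mul_of_nonneg_left hy (by positivity)
        _ = 1 := inv_mul_cancel₀ (ne_of_gt hp0)
    set a : ℤ_[p] := ⟨(p : ℚ_[p]) * y, hay⟩ with ha
    obtain ⟨x₀, ⟨hx₀R, hx₀d⟩, hx₀u⟩ := hrep (-a)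
    have key : ∀ x ∈ R₁, φ (y + (x : ℚ_[p]) / (p : ℚ_[p]))
        = if x = x₀ then 1 else (Λ : Fbar p)⁻¹ := by
      intro x hx
      have harg : y + (x : ℚ_[p]) / (p : ℚ_[p]) = ((a + x : ℤ_[p]) : ℚ_[p]) / (p : ℚ_[p]) := by
        rw [PadicInt.coe_add]
        push_cast [ha]
        field_simp
      rw [harg, hφ]
      by_cases hdvd : (p : ℤ_[p]) ∣ (a + x)
      · obtain ⟨c, hc⟩ := hdvd
        have hx0 : x = x₀ := hx₀u x ⟨hx,
          ⟨-c, by rw [show -a - x = -(a + x) by ring, hc]; ring⟩⟩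
        have hval : (((a + x : ℤ_[p]) : ℚ_[p]) / (p : ℚ_[p])) = ((c : ℚ_[p])) := by
          rw [hc]; push_cast; field_simp
        rw [hval]
        rw [if_pos ((Padic.norm_le_one_iff_val_nonneg _).1 c.2)]
        rw [if_pos hx0]
      · have hx0 : x ≠ x₀ := by
          intro h
          apply hdvd
          obtain ⟨c, hc⟩ := hx₀d
          exact ⟨-c, by rw [← h] at hc; rw [show a + x = -(-a - x) by ring, hc]; ring⟩
        have hw0 : (a + x : ℤ_[p]) ≠ 0 := by
          intro h; exact hdvd (h ▸ dvd_zero _)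
        have hwnorm : ‖(a + x : ℤ_[p])‖ = 1 := by
          rcases lt_or_eq_of_le (PadicInt.norm_le_one (a + x)) with h | h
          · exact absurd ((PadicInt.norm_lt_one_iff_dvd _).1 h) hdvd
          · exact h
        have hwQ : ((a + x : ℤ_[p]) : ℚ_[p]) ≠ 0 :=
          fun h => hw0 (Subtype.coe_injective h)
        have hq0 : (((a + x : ℤ_[p]) : ℚ_[p]) / (p : ℚ_[p])) ≠ 0 := div_ne_zero hwQ hpQ
        have hqnorm : ‖((a + x : ℤ_[p]) : ℚ_[p]) / (p : ℚ_[p])‖ = (p : ℝ) := by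
          rw [norm_div, Padic.norm_p, show ‖((a + x : ℤ_[p]) : ℚ_[p])‖ = 1 from hwnorm]
          field_simp
        have hval : (((a + x : ℤ_[p]) : ℚ_[p]) / (p : ℚ_[p])).valuation = -1 := by
          have := Padic.norm_eq_zpow_neg_valuation hq0
          rw [hqnorm] at this
          have h2 : (p : ℝ) ^ (1 : ℤ) = (p : ℝ) ^ (-(((a + x : ℤ_[p]) : ℚ_[p]) / (p : ℚ_[p])).valuation) := by
            rw [zpow_one]; exact this
          have := (zpow_right_strictMono₀ hp1).injective h2
          omega
        rw [hval, if_neg (by norm_num), if_neg hx0, zpow_neg_one]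
    rw [Finset.sum_congr rfl key]
    have split : ∀ x : ℤ_[p], (if x = x₀ then (1 : Fbar p) else (Λ : Fbar p)⁻¹)
        = (if x = x₀ then 1 - (Λ : Fbar p)⁻¹ else 0) + (Λ : Fbar p)⁻¹ := by
      intro x; by_cases h : x = x₀ <;> simp [h]
    simp only [split]
    rw [Finset.sum_add_distrib, Finset.sum_ite_eq' R₁ x₀ (fun _ => 1 - (Λ : Fbar p)⁻¹),
      if_pos hx₀R, Finset.sum_const, hcard, nsmul_eq_mul, hpF, zero_mul, add_zero,
      if_pos hy, mul_one]
  · -- ‖y‖ > p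
    have hylt : (p : ℝ) < ‖y‖ := lt_of_not_ge hy
    have hy0 : y ≠ 0 := by
      intro h; rw [h, norm_zero] at hylt; linarith
    have hyval : ¬ (0 ≤ y.valuation) := by
      intro h
      have := (Padic.norm_le_one_iff_val_nonneg y).2 h
      linarith
    have key : ∀ x ∈ R₁, φ (y + (x : ℚ_[p]) / (p : ℚ_[p]))
        = (Λ : Fbar p) ^ y.valuation := by
      intro x hx
      have hxnorm : ‖(x : ℚ_[p]) / (p : ℚ_[p])‖ ≤ (p : ℝ) := by
        rw [norm_div, Padic.norm_p]
        calc ‖(x : ℚ_[p])‖ / (p : ℝ)⁻¹ = ‖(x : ℚ_[p])‖ * (p : ℝ) := by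
              field_simp
          _ ≤ 1 * (p : ℝ) := by
              apply mul_le_mul_of_nonneg_right _ (le_of_lt hp0)
              exact x.2
          _ = (p : ℝ) := one_mul _
      have hne : ‖y‖ ≠ ‖(x : ℚ_[p]) / (p : ℚ_[p])‖ := by
        intro h; rw [← h] at hxnorm; linarith
      have hnorm : ‖y + (x : ℚ_[p]) / (p : ℚ_[p])‖ = ‖y‖ := by
        rw [Padic.add_eq_max_of_ne hne]
        exact max_eq_left (le_of_lt (lt_of_le_of_lt hxnorm hylt))
      have hs0 : y + (x : ℚ_[p]) / (p : ℚ_[p]) ≠ 0 := by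
        intro h; rw [h, norm_zero] at hnorm
        exact hy0 (norm_eq_zero.1 hnorm.symm)
      rw [hφ, val_eq_of_norm_eq hs0 hy0 hnorm, if_neg hyval]
    rw [Finset.sum_congr rfl key, Finset.sum_const, hcard, nsmul_eq_mul, hpF,
      zero_mul, if_neg hy, mul_zero]
end

section
/- Key summation identity (unramified case, level 2): with notation as before (φ₀(x) = 1 for v(x) ≥ 0, φ₀(x) = Λ^{v(x)} for v(x) ≤ 0, Λ ∈ \overline{\mathbb{F}}_p^×, residue field of size q = 0 in \overline{\mathbb{F}}_p), for every y ∈ F: Σ_{x ∈ R₂} φ₀(y + x/ϖ²) = (1 − Λ^{-1}) · 1_{ϖ^{-2}O_F}(y), where R₂ ⊂ O_F is a set of representatives of O_F/ϖ²O_F. -/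
section Aux

variable {p : ℕ} [Fact p.Prime]

lemma aux_dvd_iff_toZModPow (n : ℕ) (w : ℤ_[p]) :
    (p : ℤ_[p]) ^ n ∣ w ↔ PadicInt.toZModPow n w = 0 := by
  rw [← RingHom.mem_ker, PadicInt.ker_toZModPow, Ideal.mem_span_singleton]

lemma aux_sum_transfer {M : Type*} [AddCommMonoid M]
    (R₂ : Finset ℤ_[p])
    (hrep : ∀ a : ℤ_[p], ∃! x : ℤ_[p], x ∈ R₂ ∧ (p : ℤ_[p]) ^ 2 ∣ (a - x))
    (z : ℤ_[p]) (g : ℕ → M) :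
    ∑ x ∈ R₂, g ((PadicInt.toZModPow 2 (z + x)).val) = ∑ n ∈ Finset.range (p ^ 2), g n := by
  have hp : p.Prime := Fact.out
  haveI : NeZero (p ^ 2) := ⟨pow_ne_zero 2 hp.pos.ne'⟩
  refine Finset.sum_bij (fun x _ => (PadicInt.toZModPow 2 (z + x)).val) ?_ ?_ ?_ ?_
  · intro a _
    exact Finset.mem_range.2 (ZMod.val_lt _)
  · intro a ha b hb h
    have h' : PadicInt.toZModPow 2 (z + a) = PadicInt.toZModPow 2 (z + b) := by
      have := congrArg (Nat.cast : ℕ → ZMod (p ^ 2)) h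
      rwa [ZMod.natCast_zmod_val, ZMod.natCast_zmod_val] at this
    have hdvd : (p : ℤ_[p]) ^ 2 ∣ (a - b) := by
      rw [aux_dvd_iff_toZModPow]
      have : a - b = (z + a) - (z + b) := by ring
      rw [this, map_sub, h', sub_self]
    exact (hrep a).unique ⟨ha, by simp⟩ ⟨hb, hdvd⟩
  · intro n hn
    obtain ⟨x, ⟨hxR, hdvd⟩, -⟩ := hrep ((n : ℤ_[p]) - z)
    refine ⟨x, hxR, ?_⟩
    have h0 : (p : ℤ_[p]) ^ 2 ∣ ((n : ℤ_[p]) - (z + x)) := by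
      have : (n : ℤ_[p]) - (z + x) = ((n : ℤ_[p]) - z) - x := by ring
      rwa [this]
    have h1 : PadicInt.toZModPow 2 (z + x) = (n : ZMod (p ^ 2)) := by
      rw [aux_dvd_iff_toZModPow, map_sub, map_natCast, sub_eq_zero] at h0
      exact h0.symm
    show ((PadicInt.toZModPow 2) (z + x)).val = n
    rw [h1, ZMod.val_natCast, Nat.mod_eq_of_lt (Finset.mem_range.1 hn)]
  · intro a _
    rfl

lemma aux_card (R₂ : Finset ℤ_[p])
    (hrep : ∀ a : ℤ_[p], ∃! x : ℤ_[p], x ∈ R₂ ∧ (p : ℤ_[p]) ^ 2 ∣ (a - x)) :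
    R₂.card = p ^ 2 := by
  have := aux_sum_transfer R₂ hrep 0 (fun _ => (1 : ℕ))
  simpa using this

lemma aux_nat_dvd (m : ℕ) : (p : ℤ_[p]) ∣ (m : ℤ_[p]) ↔ p ∣ m := by
  have h := PadicInt.pow_p_dvd_int_iff (p := p) 1 (m : ℤ)
  rw [pow_one] at h
  constructor
  · intro hd
    have : (p : ℤ_[p]) ∣ ((m : ℤ) : ℤ_[p]) := by push_cast; exact_mod_cast hd
    have h2 := h.1 this
    rw [pow_one] at h2
    exact_mod_cast h2
  · rintro ⟨k, rfl⟩
    push_cast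
    exact Dvd.intro k rfl

lemma aux_p_dvd_iff (w : ℤ_[p]) :
    (p : ℤ_[p]) ∣ w ↔ p ∣ (PadicInt.toZModPow 2 w).val := by
  set m := (PadicInt.toZModPow 2 w).val with hm
  have hsub : (p : ℤ_[p]) ^ 2 ∣ (w - (m : ℤ_[p])) := by
    rw [aux_dvd_iff_toZModPow, map_sub, map_natCast, hm, ZMod.natCast_zmod_val, sub_self]
  have hpd : (p : ℤ_[p]) ∣ (w - (m : ℤ_[p])) :=
    dvd_trans (dvd_pow_self _ two_ne_zero) hsub
  constructor
  · intro hw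
    have : (p : ℤ_[p]) ∣ (m : ℤ_[p]) := by
      have : (m : ℤ_[p]) = w - (w - (m : ℤ_[p])) := by ring
      rw [this]
      exact dvd_sub hw hpd
    exact (aux_nat_dvd m).1 this
  · intro hd
    have : w = (w - (m : ℤ_[p])) + (m : ℤ_[p]) := by ring
    rw [this]
    exact dvd_add hpd ((aux_nat_dvd m).2 hd)

end Aux

/-- Key summation identity (unramified case, level 2): with
`φ₀(x) = 1` for `v(x) ≥ 0` and `φ₀(x) = Λ^{v(x)}` for `v(x) < 0`, and `R₂` a set
of representatives of `O_F/ϖ²O_F` (here `F = ℚ_p`, `ϖ = p`), one has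
`Σ_{x ∈ R₂} φ₀(y + x/ϖ²) = (1 − Λ⁻¹)·1_{ϖ⁻²O_F}(y)` for every `y`. -/
theorem stmt_12 (p : ℕ) [Fact p.Prime] (Λ : (Fbar p)ˣ)
    (R₂ : Finset ℤ_[p])
    (hrep : ∀ a : ℤ_[p], ∃! x : ℤ_[p], x ∈ R₂ ∧ (p : ℤ_[p]) ^ 2 ∣ (a - x))
    (φ : ℚ_[p] → Fbar p)
    (hφ : ∀ x : ℚ_[p], φ x =
      if 0 ≤ x.valuation then 1 else (Λ : Fbar p) ^ x.valuation)
    (y : ℚ_[p]) :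
    ∑ x ∈ R₂, φ (y + (x : ℚ_[p]) / (p : ℚ_[p]) ^ 2) =
      (1 - (Λ : Fbar p)⁻¹) * (if ‖y‖ ≤ (p : ℝ) ^ 2 then 1 else 0) := by
  classical
  have hp : p.Prime := Fact.out
  have hp1 : (1 : ℝ) < p := by exact_mod_cast hp.one_lt
  have hp0R : (0 : ℝ) < p := lt_trans zero_lt_one hp1
  have hpQ : (p : ℚ_[p]) ≠ 0 := Nat.cast_ne_zero.2 hp.pos.ne'
  have hchar : (p : Fbar p) = 0 := CharP.cast_eq_zero (Fbar p) p
  have hnormp2 : ‖(p : ℚ_[p]) ^ 2‖ = ((p : ℝ) ^ 2)⁻¹ := by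
    rw [Padic.norm_p_pow]
    rw [zpow_neg, zpow_natCast]
  by_cases hy : ‖y‖ ≤ (p : ℝ) ^ 2
  · -- main case
    rw [if_pos hy, mul_one]
    have hz : ‖y * (p : ℚ_[p]) ^ 2‖ ≤ 1 := by
      rw [norm_mul, hnormp2]
      have h2 : (0 : ℝ) < (p : ℝ) ^ 2 := by positivity
      rw [← le_div_iff₀ (by positivity), one_div, inv_inv]
      exact hy
    set z : ℤ_[p] := ⟨y * (p : ℚ_[p]) ^ 2, hz⟩ with hzdef
    have hzcoe : (z : ℚ_[p]) = y * (p : ℚ_[p]) ^ 2 := rfl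
    set g : ℕ → Fbar p := fun n =>
      if n = 0 then 1 else if p ∣ n then (Λ : Fbar p)⁻¹ else ((Λ : Fbar p)⁻¹) ^ 2 with hg
    -- each term equals g of the residue
    have key : ∀ w : ℤ_[p],
        φ ((w : ℚ_[p]) / (p : ℚ_[p]) ^ 2) = g ((PadicInt.toZModPow 2 w).val) := by
      intro w
      -- step 1: express φ (w / p²) via divisibility
      have step1 : φ ((w : ℚ_[p]) / (p : ℚ_[p]) ^ 2)
          = if (p : ℤ_[p]) ^ 2 ∣ w then 1
            else if (p : ℤ_[p]) ∣ w then (Λ : Fbar p)⁻¹ else ((Λ : Fbar p)⁻¹) ^ 2 := by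
        by_cases hw0 : w = 0
        · subst hw0
          rw [if_pos (dvd_zero _)]
          simp [hφ, Padic.valuation_zero]
        · have hwQ : (w : ℚ_[p]) ≠ 0 := by
            exact_mod_cast (PadicInt.coe_eq_zero (x := w)).not.2 hw0
          have ht0 : (w : ℚ_[p]) / (p : ℚ_[p]) ^ 2 ≠ 0 :=
            div_ne_zero hwQ (pow_ne_zero _ hpQ)
          have hvp2 : ((p : ℚ_[p]) ^ 2).valuation = 2 := by
            have h : ((p : ℚ_[p]) ^ 2) = ((p ^ 2 : ℕ) : ℚ_[p]) := by push_cast; ring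
            rw [h, Padic.valuation_natCast, padicValNat.prime_pow]
            norm_num
          have hval : ((w : ℚ_[p]) / (p : ℚ_[p]) ^ 2).valuation = w.valuation - 2 := by
            have h1 : (w : ℚ_[p]) = ((w : ℚ_[p]) / (p : ℚ_[p]) ^ 2) * (p : ℚ_[p]) ^ 2 := by
              field_simp
            have h2 := Padic.valuation_mul ht0 (pow_ne_zero 2 hpQ)
            rw [← h1, hvp2] at h2
            have h3 : w.valuation = (w : ℚ_[p]).valuation := (PadicInt.valuation_coe w).symm
            omega
          have hdvd : ∀ n : ℕ, ((p : ℤ_[p]) ^ n ∣ w ↔ (n : ℤ) ≤ w.valuation) := by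
            intro n
            rw [← Ideal.mem_span_singleton]
            exact_mod_cast PadicInt.mem_span_pow_iff_le_valuation w hw0 n
          have hdvd2 : ((p : ℤ_[p]) ^ 2 ∣ w ↔ (2 : ℤ) ≤ w.valuation) := by
            have := hdvd 2; simpa using this
          have hdvd1 : ((p : ℤ_[p]) ∣ w ↔ (1 : ℤ) ≤ w.valuation) := by
            have := hdvd 1; simpa using this
          have hv0 : 0 ≤ w.valuation := Nat.zero_le _
          rw [hφ, hval]
          by_cases h2 : (2 : ℤ) ≤ w.valuation
          · rw [if_pos (by omega), if_pos (hdvd2.2 h2)]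
          · rw [if_neg (fun h => h2 (hdvd2.1 h)), if_neg (by omega)]
            by_cases h1 : (1 : ℤ) ≤ w.valuation
            · have hv1 : w.valuation = 1 := by omega
              rw [if_pos (hdvd1.2 h1), hv1]
              norm_num
            · have hv1 : w.valuation = 0 := by omega
              rw [if_neg (fun h => h1 (hdvd1.1 h)), hv1]
              rw [Nat.cast_zero, show (0 : ℤ) - 2 = -(2 : ℕ) by norm_num, zpow_neg, zpow_natCast, inv_pow]
      rw [step1]
      simp only [hg]
      -- step 2: translate divisibility into conditions on the residue value
      haveI : NeZero (p ^ 2) := ⟨pow_ne_zero 2 hp.pos.ne'⟩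
      have e1 : ((p : ℤ_[p]) ^ 2 ∣ w) ↔ (PadicInt.toZModPow 2 w).val = 0 := by
        rw [aux_dvd_iff_toZModPow, ZMod.val_eq_zero]
      have e2 := aux_p_dvd_iff w
      by_cases hc1 : (p : ℤ_[p]) ^ 2 ∣ w
      · rw [if_pos hc1, if_pos (e1.1 hc1)]
      · rw [if_neg hc1, if_neg (fun h => hc1 (e1.2 h))]
        by_cases hc2 : (p : ℤ_[p]) ∣ w
        · rw [if_pos hc2, if_pos (e2.1 hc2)]
        · rw [if_neg hc2, if_neg (fun h => hc2 (e2.2 h))]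
    have hterm : ∀ x : ℤ_[p],
        φ (y + (x : ℚ_[p]) / (p : ℚ_[p]) ^ 2) = g ((PadicInt.toZModPow 2 (z + x)).val) := by
      intro x
      have harg : y + (x : ℚ_[p]) / (p : ℚ_[p]) ^ 2
          = (((z + x : ℤ_[p]) : ℚ_[p])) / (p : ℚ_[p]) ^ 2 := by
        push_cast [hzcoe]
        field_simp
      rw [harg, key]
    calc ∑ x ∈ R₂, φ (y + (x : ℚ_[p]) / (p : ℚ_[p]) ^ 2)
        = ∑ x ∈ R₂, g ((PadicInt.toZModPow 2 (z + x)).val) :=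
          Finset.sum_congr rfl (fun x _ => hterm x)
      _ = ∑ n ∈ Finset.range (p ^ 2), g n := aux_sum_transfer R₂ hrep z g
      _ = 1 - (Λ : Fbar p)⁻¹ := by
          set c : Fbar p := (Λ : Fbar p)⁻¹ with hc
          set d : Fbar p := ((Λ : Fbar p)⁻¹) ^ 2 with hd
          have hsplit := (Finset.sum_filter_add_sum_filter_not
            (Finset.range (p ^ 2)) (fun n => p ∣ n) g).symm
          have himg : (Finset.range (p ^ 2)).filter (fun n => p ∣ n)
              = (Finset.range p).image (fun k => p * k) := by
            ext n
            simp only [Finset.mem_filter, Finset.mem_range, Finset.mem_image]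
            constructor
            · rintro ⟨hn, k, rfl⟩
              refine ⟨k, ?_, rfl⟩
              by_contra hk
              push_neg at hk
              have : p * p ≤ p * k := Nat.mul_le_mul_left p hk
              rw [pow_two] at hn
              omega
            · rintro ⟨k, hk, rfl⟩
              refine ⟨?_, ⟨k, rfl⟩⟩
              rw [pow_two]
              have := hp.pos
              nlinarith
          have hinj : Function.Injective (fun k => p * k) := fun a b h => by
            simpa [Nat.mul_left_cancel_iff hp.pos] using h
          have hsum1 : ∑ n ∈ (Finset.range (p ^ 2)).filter (fun n => p ∣ n), g n
              = 1 - c + (p : Fbar p) * c := by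
            rw [himg, Finset.sum_image (fun a _ b _ h => hinj h)]
            have : ∀ k ∈ Finset.range p, g (p * k)
                = (if k = 0 then 1 - c else 0) + c := by
              intro k _
              rw [hg]
              by_cases hk : k = 0
              · simp [hk]
              · have hpk : p * k ≠ 0 := Nat.mul_ne_zero hp.pos.ne' hk
                simp [hk, hpk, Dvd.intro k rfl]
            rw [Finset.sum_congr rfl this, Finset.sum_add_distrib,
              Finset.sum_ite_eq' (Finset.range p) 0 (fun _ => 1 - c),
              if_pos (Finset.mem_range.2 hp.pos), Finset.sum_const, Finset.card_range,
              nsmul_eq_mul]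
          have hsum2 : ∑ n ∈ (Finset.range (p ^ 2)).filter (fun n => ¬ p ∣ n), g n
              = ((p ^ 2 - p : ℕ) : Fbar p) * d := by
            have hval : ∀ n ∈ (Finset.range (p ^ 2)).filter (fun n => ¬ p ∣ n), g n = d := by
              intro n hn
              rw [Finset.mem_filter] at hn
              have hn0 : n ≠ 0 := fun h => hn.2 (h ▸ dvd_zero p)
              rw [hg]
              simp [hn0, hn.2]
            rw [Finset.sum_congr rfl hval, Finset.sum_const, nsmul_eq_mul]
            congr 2
            have hcards := Finset.card_filter_add_card_filter_not
              (s := Finset.range (p ^ 2)) (p := fun n => p ∣ n)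
            rw [himg, Finset.card_image_of_injective _ hinj, Finset.card_range,
              Finset.card_range] at hcards
            omega
          rw [hsplit, hsum1, hsum2, hchar]
          have hzero : ((p ^ 2 - p : ℕ) : Fbar p) = 0 := by
            rw [Nat.cast_sub (Nat.le_self_pow two_ne_zero p), Nat.cast_pow, hchar]
            ring
          rw [hzero]
          ring
  · -- |y| > p² : every term is Λ^{v(y)} and there are p² ≡ 0 of them
    rw [if_neg hy, mul_zero]
    have hylarge : (p : ℝ) ^ 2 < ‖y‖ := lt_of_not_ge hy
    have h2pos : (1 : ℝ) ≤ (p : ℝ) ^ 2 := one_le_pow₀ hp1.le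
    have hy0 : y ≠ 0 := by
      intro h
      rw [h, norm_zero] at hylarge
      nlinarith
    have hterm : ∀ x ∈ R₂, φ (y + (x : ℚ_[p]) / (p : ℚ_[p]) ^ 2)
        = (Λ : Fbar p) ^ y.valuation := by
      intro x _
      have hxnorm : ‖(x : ℚ_[p]) / (p : ℚ_[p]) ^ 2‖ ≤ (p : ℝ) ^ 2 := by
        rw [norm_div, hnormp2, div_inv_eq_mul]
        calc ‖(x : ℚ_[p])‖ * (p : ℝ) ^ 2 ≤ 1 * (p : ℝ) ^ 2 := by
              apply mul_le_mul_of_nonneg_right x.2 (by positivity)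
          _ = (p : ℝ) ^ 2 := one_mul _
      have hlt : ‖(x : ℚ_[p]) / (p : ℚ_[p]) ^ 2‖ < ‖y‖ := lt_of_le_of_lt hxnorm hylarge
      have hnorm : ‖y + (x : ℚ_[p]) / (p : ℚ_[p]) ^ 2‖ = ‖y‖ := by
        rw [Padic.add_eq_max_of_ne hlt.ne']
        exact max_eq_left hlt.le
      have hne : y + (x : ℚ_[p]) / (p : ℚ_[p]) ^ 2 ≠ 0 := by
        intro h
        rw [h, norm_zero] at hnorm
        exact hy0 (norm_eq_zero.1 hnorm.symm)
      have hveq : (y + (x : ℚ_[p]) / (p : ℚ_[p]) ^ 2).valuation = y.valuation := by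
        have h1 := Padic.norm_eq_zpow_neg_valuation hne
        rw [hnorm, Padic.norm_eq_zpow_neg_valuation hy0] at h1
        have := zpow_right_injective₀ hp0R (ne_of_gt hp1) h1
        omega
      have hvneg : ¬ (0 ≤ (y + (x : ℚ_[p]) / (p : ℚ_[p]) ^ 2).valuation) := by
        rw [hveq]
        intro h
        have := (Padic.norm_le_one_iff_val_nonneg y).2 h
        nlinarith
      rw [hφ, if_neg hvneg, hveq]
    rw [Finset.sum_congr rfl hterm, Finset.sum_const, aux_card R₂ hrep, nsmul_eq_mul]
    push_cast [hchar]
    ring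
end
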